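/- arXiv:2204.11516 — 2 statements merged into one kernel-verified Lean document; each statement's English description precedes it below -/
import Mathlib

section
/- For every K ≥ 1 there exists a constant C depending only on K such that the following holds. Let T ∈ ℕ, η > 0, δ ∈ (0,1/2), let v, ṽ ∈ ℝ^{n2} be unit vectors, let ũ ∈ ℝ^{n1} with ‖ũ‖ ≤ 2, and let u ∈ ℝ^{n1} satisfy the normal equation u = ⟨v,v_⋆⟩u_⋆ + [(Id − 𝒜*𝒜)(uvᵀ − u_⋆v_⋆ᵀ)]v. Suppose 𝒜 satisfies the RIP with constant δ, that (1/m)·‖(Σ_i (A_i)_{1,1} O_i) ṽ^⊥‖ ≤ K·√((log T + log η)/m)·‖ṽ^⊥‖, and that (1/m)·|Σ_i ⟨O_iᵀe_1, ṽ⟩·⟨D_i, ũ^⊥(ṽ^⊥)ᵀ⟩_F| ≤ K·√((log T + log η)/m)·‖𝒜(ũ^⊥(ṽ^⊥)ᵀ)‖. Then: (a) |⟨𝒜(u_⋆(v^⊥)ᵀ), 𝒜(u_⋆v_⋆ᵀ)⟩| ≤ δ·‖v^⊥ − ṽ^⊥‖ + C·√((log T + log η)/m); and (b) |⟨𝒜(u_⋆(v^⊥)ᵀ),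 𝒜(u^⊥(v^⊥)ᵀ)⟩| ≤ δ·‖u^⊥ − ũ^⊥‖ + 2δ·‖v^⊥ − ṽ^⊥‖ + C·√((log T + log η)/m). -/
open MeasureTheory ProbabilityTheory Matrix Finset
open scoped BigOperators ENNReal NNReal RealInnerProductSpace

noncomputable section

namespace ALSPaper

/-- View a plain vector as an element of Euclidean space. -/
def toE {n : ℕ} (x : Fin n → ℝ) : EuclideanSpace ℝ (Fin n) :=
  (WithLp.equiv 2 (Fin n → ℝ)).symm x

/-- View an element of Euclidean space as a plain vector. -/
def ofE {n : ℕ} (x : EuclideanSpace ℝ (Fin n)) : Fin n → ℝ :=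
  WithLp.equiv 2 (Fin n → ℝ) x

/-- The first standard basis vector. -/
def e1 (n : ℕ) : EuclideanSpace ℝ (Fin n) :=
  toE fun i => if (i : ℕ) = 0 then 1 else 0

/-- Frobenius inner product. -/
def frobInner {n1 n2 : ℕ} (A B : Matrix (Fin n1) (Fin n2) ℝ) : ℝ :=
  ∑ i, ∑ j, A i j * B i j

/-- Frobenius norm. -/
def frobNorm {n1 n2 : ℕ} (A : Matrix (Fin n1) (Fin n2) ℝ) : ℝ :=
  Real.sqrt (frobInner A A)

/-- The measurement operator. -/
def calA {n1 n2 m : ℕ} (A : Fin m → Matrix (Fin n1) (Fin n2) ℝ)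
    (X : Matrix (Fin n1) (Fin n2) ℝ) : EuclideanSpace ℝ (Fin m) :=
  toE fun i => (Real.sqrt m)⁻¹ * frobInner (A i) X

/-- The adjoint of the measurement operator. -/
def calAdj {n1 n2 m : ℕ} (A : Fin m → Matrix (Fin n1) (Fin n2) ℝ)
    (w : EuclideanSpace ℝ (Fin m)) : Matrix (Fin n1) (Fin n2) ℝ :=
  ∑ i, ((Real.sqrt m)⁻¹ * ofE w i) • A i

/-- The restricted isometry property (RIP) with constant `δ` (for rank ≤ 4). -/
def HasRIP {n1 n2 m : ℕ} (A : Fin m → Matrix (Fin n1) (Fin n2) ℝ) (δ : ℝ) : Prop :=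
  ∀ Z : Matrix (Fin n1) (Fin n2) ℝ, Z.rank ≤ 4 →
    (1 - δ) * frobNorm Z ^ 2 ≤ ‖calA A Z‖ ^ 2 ∧ ‖calA A Z‖ ^ 2 ≤ (1 + δ) * frobNorm Z ^ 2

/-- Component of `v` parallel to the first standard basis vector. -/
def par {n : ℕ} (v : EuclideanSpace ℝ (Fin n)) : EuclideanSpace ℝ (Fin n) :=
  ⟪e1 n, v⟫ • e1 n

/-- Component of `v` orthogonal to the first standard basis vector. -/
def perp {n : ℕ} (v : EuclideanSpace ℝ (Fin n)) : EuclideanSpace ℝ (Fin n) :=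
  v - par v

/-- The "diagonal block" part of a measurement matrix. -/
def Dmat {n1 n2 : ℕ} (A : Matrix (Fin n1) (Fin n2) ℝ) : Matrix (Fin n1) (Fin n2) ℝ :=
  vecMulVec (ofE (e1 n1)) (ofE (e1 n1)) * A * vecMulVec (ofE (e1 n2)) (ofE (e1 n2))
    + (1 - vecMulVec (ofE (e1 n1)) (ofE (e1 n1))) * A *
        (1 - vecMulVec (ofE (e1 n2)) (ofE (e1 n2)))

/-- The "off-diagonal block" part of a measurement matrix. -/
def Omat {n1 n2 : ℕ} (A : Matrix (Fin n1) (Fin n2) ℝ) : Matrix (Fin n1) (Fin n2) ℝ :=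
  vecMulVec (ofE (e1 n1)) (ofE (e1 n1)) * A * (1 - vecMulVec (ofE (e1 n2)) (ofE (e1 n2)))
    + (1 - vecMulVec (ofE (e1 n1)) (ofE (e1 n1))) * A * vecMulVec (ofE (e1 n2)) (ofE (e1 n2))

/-- The (1,1) entry of a matrix. -/
def ent11 {n1 n2 : ℕ} (A : Matrix (Fin n1) (Fin n2) ℝ) : ℝ :=
  frobInner (vecMulVec (ofE (e1 n1)) (ofE (e1 n2))) A

/-- Spectral (operator) norm of a matrix. -/
def specNorm {n1 n2 : ℕ} (M : Matrix (Fin n1) (Fin n2) ℝ) : ℝ :=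
  ‖LinearMap.toContinuousLinearMap (Matrix.toEuclideanLin M)‖

/-- The normal equation for the least-squares update. -/
def NormalEq {n1 n2 m : ℕ} (A : Fin m → Matrix (Fin n1) (Fin n2) ℝ)
    (u : EuclideanSpace ℝ (Fin n1)) (v : EuclideanSpace ℝ (Fin n2)) : Prop :=
  u = ⟪v, e1 n2⟫ • e1 n1 +
    toE (((vecMulVec (ofE u) (ofE v) - vecMulVec (ofE (e1 n1)) (ofE (e1 n2))) -
      calAdj A (calA A (vecMulVec (ofE u) (ofE v) - vecMulVec (ofE (e1 n1)) (ofE (e1 n2)))))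
        *ᵥ ofE v)

/-- sin of the angle between two vectors. -/
def sinAngle {n : ℕ} (a b : EuclideanSpace ℝ (Fin n)) : ℝ :=
  Real.sqrt (1 - ⟪a, b⟫ ^ 2 / (‖a‖ ^ 2 * ‖b‖ ^ 2))

/-- `c_t` sequence. -/
def cseq (n2 t : ℕ) : ℝ := (1 + 1 / Real.log n2) ^ t - 1

/-- ALS iterates. -/
def IsALS {n1 n2 m : ℕ} (A : Fin m → Matrix (Fin n1) (Fin n2) ℝ)
    (y : EuclideanSpace ℝ (Fin m)) (v0 : EuclideanSpace ℝ (Fin n2))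
    (u : ℕ → EuclideanSpace ℝ (Fin n1)) (v : ℕ → EuclideanSpace ℝ (Fin n2))
    (uh : ℕ → EuclideanSpace ℝ (Fin n1)) (vh : ℕ → EuclideanSpace ℝ (Fin n2)) : Prop :=
  v 0 = v0 ∧
  ∀ t : ℕ,
    (∀ u' : EuclideanSpace ℝ (Fin n1),
      ‖y - calA A (vecMulVec (ofE (uh t)) (ofE (v t)))‖ ≤
        ‖y - calA A (vecMulVec (ofE u') (ofE (v t)))‖) ∧
    u (t + 1) = ‖uh t‖⁻¹ • uh t ∧
    (∀ v' : EuclideanSpace ℝ (Fin n2),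
      ‖y - calA A (vecMulVec (ofE (u (t + 1))) (ofE (vh t)))‖ ≤
        ‖y - calA A (vecMulVec (ofE (u (t + 1))) (ofE v'))‖) ∧
    v (t + 1) = ‖vh t‖⁻¹ • vh t

section AuxLemmas

variable {n n1 n2 m : ℕ}

lemma aux_ofE_toE (x : Fin n → ℝ) : ofE (toE x) = x := rfl

lemma aux_fI_comm (X Y : Matrix (Fin n1) (Fin n2) ℝ) : frobInner X Y = frobInner Y X :=
  Finset.sum_congr rfl fun _ _ => Finset.sum_congr rfl fun _ _ => mul_comm _ _

lemma aux_fI_add_right (X Y Z : Matrix (Fin n1) (Fin n2) ℝ) :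
    frobInner X (Y + Z) = frobInner X Y + frobInner X Z := by
  unfold frobInner
  rw [← Finset.sum_add_distrib]
  refine Finset.sum_congr rfl fun i _ => ?_
  rw [← Finset.sum_add_distrib]
  exact Finset.sum_congr rfl fun j _ => by simp [Matrix.add_apply, mul_add]

lemma aux_fI_add_left (X Y Z : Matrix (Fin n1) (Fin n2) ℝ) :
    frobInner (X + Y) Z = frobInner X Z + frobInner Y Z := by
  rw [aux_fI_comm, aux_fI_add_right, aux_fI_comm Z X, aux_fI_comm Z Y]

lemma aux_fI_sub_right (X Y Z : Matrix (Fin n1) (Fin n2) ℝ) :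
    frobInner X (Y - Z) = frobInner X Y - frobInner X Z := by
  unfold frobInner
  rw [← Finset.sum_sub_distrib]
  refine Finset.sum_congr rfl fun i _ => ?_
  rw [← Finset.sum_sub_distrib]
  exact Finset.sum_congr rfl fun j _ => by simp [Matrix.sub_apply, mul_sub]

lemma aux_fI_sub_left (X Y Z : Matrix (Fin n1) (Fin n2) ℝ) :
    frobInner (X - Y) Z = frobInner X Z - frobInner Y Z := by
  rw [aux_fI_comm, aux_fI_sub_right, aux_fI_comm Z X, aux_fI_comm Z Y]

lemma aux_fI_smul_right (c : ℝ) (X Y : Matrix (Fin n1) (Fin n2) ℝ) :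
    frobInner X (c • Y) = c * frobInner X Y := by
  unfold frobInner
  rw [Finset.mul_sum]
  refine Finset.sum_congr rfl fun i _ => ?_
  rw [Finset.mul_sum]
  exact Finset.sum_congr rfl fun j _ => by simp [Matrix.smul_apply]; ring

lemma aux_fI_smul_left (c : ℝ) (X Y : Matrix (Fin n1) (Fin n2) ℝ) :
    frobInner (c • X) Y = c * frobInner X Y := by
  rw [aux_fI_comm, aux_fI_smul_right, aux_fI_comm]

lemma aux_fI_sum_left {ι : Type*} (s : Finset ι) (M : ι → Matrix (Fin n1) (Fin n2) ℝ)
    (Y : Matrix (Fin n1) (Fin n2) ℝ) :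
    frobInner (∑ i ∈ s, M i) Y = ∑ i ∈ s, frobInner (M i) Y := by
  classical
  induction s using Finset.induction_on with
  | empty => simp [frobInner]
  | insert _ _ h ih => rw [Finset.sum_insert h, aux_fI_add_left, ih, Finset.sum_insert h]

lemma aux_fI_self_nonneg (X : Matrix (Fin n1) (Fin n2) ℝ) : 0 ≤ frobInner X X :=
  Finset.sum_nonneg fun _ _ => Finset.sum_nonneg fun _ _ => mul_self_nonneg _

lemma aux_frobNorm_nonneg (X : Matrix (Fin n1) (Fin n2) ℝ) : 0 ≤ frobNorm X :=
  Real.sqrt_nonneg _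

lemma aux_frobNorm_sq (X : Matrix (Fin n1) (Fin n2) ℝ) :
    frobNorm X ^ 2 = frobInner X X :=
  Real.sq_sqrt (aux_fI_self_nonneg X)

lemma aux_fI_eq_zero {X : Matrix (Fin n1) (Fin n2) ℝ} (h : frobInner X X = 0) : X = 0 := by
  ext i j
  have h1 : ∀ i ∈ (Finset.univ : Finset (Fin n1)), (0:ℝ) ≤ ∑ j, X i j * X i j :=
    fun _ _ => Finset.sum_nonneg fun _ _ => mul_self_nonneg _
  have h2 := (Finset.sum_eq_zero_iff_of_nonneg h1).1 h i (Finset.mem_univ i)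
  have h3 := (Finset.sum_eq_zero_iff_of_nonneg
    (fun j _ => mul_self_nonneg (X i j))).1 h2 j (Finset.mem_univ j)
  have := mul_self_eq_zero.1 h3
  simpa using this

lemma aux_fI_vmv (x z : Fin n1 → ℝ) (y w : Fin n2 → ℝ) :
    frobInner (vecMulVec x y) (vecMulVec z w) = (∑ i, x i * z i) * (∑ j, y j * w j) := by
  unfold frobInner
  rw [Finset.sum_mul_sum]
  exact Finset.sum_congr rfl fun i _ => Finset.sum_congr rfl fun j _ => by
    simp [Matrix.vecMulVec_apply]; ring

lemma aux_fI_M_vmv (M : Matrix (Fin n1) (Fin n2) ℝ) (x : Fin n1 → ℝ) (y : Fin n2 → ℝ) :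
    frobInner M (vecMulVec x y) = ∑ i, x i * (M *ᵥ y) i := by
  unfold frobInner
  refine Finset.sum_congr rfl fun i _ => ?_
  simp only [Matrix.mulVec, dotProduct, Finset.mul_sum]
  exact Finset.sum_congr rfl fun j _ => by simp [Matrix.vecMulVec_apply]; ring

lemma aux_norm_toE_sq (x : Fin n → ℝ) : ‖toE x‖ ^ 2 = ∑ i, x i * x i := by
  rw [EuclideanSpace.norm_eq, Real.sq_sqrt (Finset.sum_nonneg fun _ _ => sq_nonneg _)]
  exact Finset.sum_congr rfl fun i _ => by
    rw [show (toE x) i = x i from rfl, Real.norm_eq_abs, sq_abs, sq]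

lemma aux_sum_sq_nonneg (x : Fin n → ℝ) : 0 ≤ ∑ i, x i * x i :=
  Finset.sum_nonneg fun _ _ => mul_self_nonneg _

lemma aux_norm_toE_le {x y : Fin n → ℝ} (h : ∀ i, x i * x i ≤ y i * y i) :
    ‖toE x‖ ≤ ‖toE y‖ := by
  rw [EuclideanSpace.norm_eq, EuclideanSpace.norm_eq]
  refine Real.sqrt_le_sqrt (Finset.sum_le_sum fun i _ => ?_)
  have hx : ‖(toE x) i‖ ^ 2 = x i * x i := by
    rw [show (toE x) i = x i from rfl, Real.norm_eq_abs, sq_abs, sq]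
  have hy : ‖(toE y) i‖ ^ 2 = y i * y i := by
    rw [show (toE y) i = y i from rfl, Real.norm_eq_abs, sq_abs, sq]
  rw [hx, hy]; exact h i

lemma aux_coord_le_norm (x : Fin n → ℝ) (i : Fin n) : |x i| ≤ ‖toE x‖ := by
  rw [EuclideanSpace.norm_eq]
  have h1 : |x i| = Real.sqrt (‖(toE x) i‖ ^ 2) := by
    rw [show (toE x) i = x i from rfl, Real.norm_eq_abs, sq_abs, Real.sqrt_sq_eq_abs]
  rw [h1]
  exact Real.sqrt_le_sqrt (Finset.single_le_sum (f := fun j => ‖(toE x) j‖ ^ 2)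
    (fun j _ => sq_nonneg _) (Finset.mem_univ i))

lemma aux_frobNorm_vmv (x : Fin n1 → ℝ) (y : Fin n2 → ℝ) :
    frobNorm (vecMulVec x y) = ‖toE x‖ * ‖toE y‖ := by
  unfold frobNorm
  rw [aux_fI_vmv]
  rw [Real.sqrt_mul (aux_sum_sq_nonneg x)]
  congr 1
  · rw [← aux_norm_toE_sq, Real.sqrt_sq (norm_nonneg _)]
  · rw [← aux_norm_toE_sq, Real.sqrt_sq (norm_nonneg _)]

lemma aux_inner_euclidean (x y : EuclideanSpace ℝ (Fin n)) :
    ⟪x, y⟫ = ∑ i, ofE x i * ofE y i := by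
  rw [PiLp.inner_apply]
  exact Finset.sum_congr rfl fun i _ => by
    simp [RCLike.inner_apply, ofE]; ring

lemma aux_inner_calA (A : Fin m → Matrix (Fin n1) (Fin n2) ℝ)
    (X Y : Matrix (Fin n1) (Fin n2) ℝ) :
    ⟪calA A X, calA A Y⟫ = (m : ℝ)⁻¹ * ∑ i, frobInner (A i) X * frobInner (A i) Y := by
  rw [aux_inner_euclidean, Finset.mul_sum]
  refine Finset.sum_congr rfl fun i _ => ?_
  show ((Real.sqrt m)⁻¹ * frobInner (A i) X) * ((Real.sqrt m)⁻¹ * frobInner (A i) Y) = _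
  have h : (Real.sqrt m)⁻¹ * (Real.sqrt m)⁻¹ = (m : ℝ)⁻¹ := by
    rw [← mul_inv, Real.mul_self_sqrt (Nat.cast_nonneg m)]
  calc ((Real.sqrt m)⁻¹ * frobInner (A i) X) * ((Real.sqrt m)⁻¹ * frobInner (A i) Y)
      = ((Real.sqrt m)⁻¹ * (Real.sqrt m)⁻¹) * (frobInner (A i) X * frobInner (A i) Y) := by ring
    _ = _ := by rw [h]

lemma aux_norm_calA_sq (A : Fin m → Matrix (Fin n1) (Fin n2) ℝ)
    (X : Matrix (Fin n1) (Fin n2) ℝ) :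
    ‖calA A X‖ ^ 2 = (m : ℝ)⁻¹ * ∑ i, frobInner (A i) X * frobInner (A i) X := by
  rw [← real_inner_self_eq_norm_sq, aux_inner_calA]

lemma aux_calA_add (A : Fin m → Matrix (Fin n1) (Fin n2) ℝ)
    (X Y : Matrix (Fin n1) (Fin n2) ℝ) :
    calA A (X + Y) = calA A X + calA A Y := by
  ext i
  show (Real.sqrt m)⁻¹ * frobInner (A i) (X + Y) = _
  rw [aux_fI_add_right]
  show _ = (Real.sqrt m)⁻¹ * frobInner (A i) X + (Real.sqrt m)⁻¹ * frobInner (A i) Y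
  ring

lemma aux_calA_smul (A : Fin m → Matrix (Fin n1) (Fin n2) ℝ) (c : ℝ)
    (X : Matrix (Fin n1) (Fin n2) ℝ) :
    calA A (c • X) = c • calA A X := by
  ext i
  show (Real.sqrt m)⁻¹ * frobInner (A i) (c • X) = c * ((Real.sqrt m)⁻¹ * frobInner (A i) X)
  rw [aux_fI_smul_right]; ring

lemma aux_rank_vmv (x : Fin n1 → ℝ) (y : Fin n2 → ℝ) :
    (vecMulVec x y).rank ≤ 1 := by
  rw [Matrix.vecMulVec_eq (Fin 1)]
  calc (Matrix.replicateCol (Fin 1) x * Matrix.replicateRow (Fin 1) y).rank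
      ≤ (Matrix.replicateRow (Fin 1) y).rank := Matrix.rank_mul_le_right _ _
    _ ≤ Fintype.card (Fin 1) := Matrix.rank_le_card_height _
    _ = 1 := by simp

lemma aux_rank_add_le (X Y : Matrix (Fin n1) (Fin n2) ℝ) :
    (X + Y).rank ≤ X.rank + Y.rank := by
  have hle : LinearMap.range (X + Y).mulVecLin ≤
      LinearMap.range X.mulVecLin ⊔ LinearMap.range Y.mulVecLin := by
    rintro _ ⟨v, rfl⟩
    rw [Matrix.mulVecLin_add]
    exact Submodule.mem_sup.2 ⟨X.mulVecLin v, ⟨v, rfl⟩, Y.mulVecLin v, ⟨v, rfl⟩, rfl⟩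
  calc (X + Y).rank
      ≤ Module.finrank ℝ ↥(LinearMap.range X.mulVecLin ⊔ LinearMap.range Y.mulVecLin) :=
        Submodule.finrank_mono hle
    _ ≤ X.rank + Y.rank := Submodule.finrank_add_le_finrank_add_finrank _ _

lemma aux_rank_neg (Y : Matrix (Fin n1) (Fin n2) ℝ) : (-Y).rank = Y.rank := by
  have h : (-Y).mulVecLin = -Y.mulVecLin := by
    ext v
    simp [Matrix.mulVecLin_apply, Matrix.neg_mulVec]
  have h2 : LinearMap.range (-Y).mulVecLin = LinearMap.range Y.mulVecLin := by
    rw [h, LinearMap.range_neg]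
  unfold Matrix.rank
  rw [h2]

lemma aux_rank_sub_le (X Y : Matrix (Fin n1) (Fin n2) ℝ) :
    (X - Y).rank ≤ X.rank + Y.rank := by
  rw [sub_eq_add_neg]
  exact le_trans (aux_rank_add_le X (-Y)) (by rw [aux_rank_neg])

lemma aux_rank_smul_le (c : ℝ) (X : Matrix (Fin n1) (Fin n2) ℝ) :
    (c • X).rank ≤ X.rank := by
  have hle : LinearMap.range (c • X).mulVecLin ≤ LinearMap.range X.mulVecLin := by
    rintro _ ⟨v, rfl⟩
    exact ⟨c • v, by simp [Matrix.mulVecLin_apply, Matrix.smul_mulVec,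
      Matrix.mulVec_smul]⟩
  exact Submodule.finrank_mono hle

lemma aux_calA_sub (A : Fin m → Matrix (Fin n1) (Fin n2) ℝ)
    (X Y : Matrix (Fin n1) (Fin n2) ℝ) :
    calA A (X - Y) = calA A X - calA A Y := by
  ext i
  show (Real.sqrt m)⁻¹ * frobInner (A i) (X - Y) = _
  rw [aux_fI_sub_right]
  show _ = (Real.sqrt m)⁻¹ * frobInner (A i) X - (Real.sqrt m)⁻¹ * frobInner (A i) Y
  ring

lemma aux_calA_zero (A : Fin m → Matrix (Fin n1) (Fin n2) ℝ) :
    calA A (0 : Matrix (Fin n1) (Fin n2) ℝ) = 0 := by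
  ext i
  show (Real.sqrt m)⁻¹ * frobInner (A i) 0 = 0
  simp [frobInner]

lemma aux_fI_zero_right (X : Matrix (Fin n1) (Fin n2) ℝ) :
    frobInner X (0 : Matrix (Fin n1) (Fin n2) ℝ) = 0 := by
  simp [frobInner]

lemma aux_fI_zero_left (Y : Matrix (Fin n1) (Fin n2) ℝ) :
    frobInner (0 : Matrix (Fin n1) (Fin n2) ℝ) Y = 0 := by
  simp [frobInner]

lemma aux_cross0 {A : Fin m → Matrix (Fin n1) (Fin n2) ℝ} {δ : ℝ}
    (hR : HasRIP A δ) {X Y : Matrix (Fin n1) (Fin n2) ℝ}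
    (hX : X.rank ≤ 2) (hY : Y.rank ≤ 2) :
    |⟪calA A X, calA A Y⟫ - frobInner X Y| ≤ δ / 2 * (frobNorm X ^ 2 + frobNorm Y ^ 2) := by
  have h1 := hR (X + Y) (le_trans (aux_rank_add_le X Y) (by omega))
  have h2 := hR (X - Y) (le_trans (aux_rank_sub_le X Y) (by omega))
  have eA : ‖calA A (X + Y)‖ ^ 2 =
      ‖calA A X‖ ^ 2 + 2 * ⟪calA A X, calA A Y⟫ + ‖calA A Y‖ ^ 2 := by
    rw [aux_calA_add]; exact norm_add_sq_real _ _
  have eB : ‖calA A (X - Y)‖ ^ 2 =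
      ‖calA A X‖ ^ 2 - 2 * ⟪calA A X, calA A Y⟫ + ‖calA A Y‖ ^ 2 := by
    rw [aux_calA_sub]; exact norm_sub_sq_real _ _
  have fA : frobNorm (X + Y) ^ 2 = frobNorm X ^ 2 + 2 * frobInner X Y + frobNorm Y ^ 2 := by
    rw [aux_frobNorm_sq, aux_frobNorm_sq, aux_frobNorm_sq, aux_fI_add_left,
      aux_fI_add_right, aux_fI_add_right, aux_fI_comm Y X]
    ring
  have fB : frobNorm (X - Y) ^ 2 = frobNorm X ^ 2 - 2 * frobInner X Y + frobNorm Y ^ 2 := by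
    rw [aux_frobNorm_sq, aux_frobNorm_sq, aux_frobNorm_sq, aux_fI_sub_left,
      aux_fI_sub_right, aux_fI_sub_right, aux_fI_comm Y X]
    ring
  obtain ⟨h1l, h1r⟩ := h1
  obtain ⟨h2l, h2r⟩ := h2
  rw [eA, fA] at h1l h1r
  rw [eB, fB] at h2l h2r
  rw [abs_le]
  constructor
  · linarith
  · linarith

lemma aux_cross {A : Fin m → Matrix (Fin n1) (Fin n2) ℝ} {δ : ℝ} (hδ : 0 ≤ δ)
    (hR : HasRIP A δ) {X Y : Matrix (Fin n1) (Fin n2) ℝ}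
    (hX : X.rank ≤ 2) (hY : Y.rank ≤ 2) :
    |⟪calA A X, calA A Y⟫ - frobInner X Y| ≤ δ * frobNorm X * frobNorm Y := by
  by_cases hx : frobNorm X = 0
  · have hX0 : X = 0 := aux_fI_eq_zero (by rw [← aux_frobNorm_sq, hx]; ring)
    rw [hX0] at hx ⊢
    rw [aux_calA_zero, aux_fI_zero_left, hx]
    simp [inner_zero_left]
  by_cases hy : frobNorm Y = 0
  · have hY0 : Y = 0 := aux_fI_eq_zero (by rw [← aux_frobNorm_sq, hy]; ring)
    rw [hY0] at hy ⊢
    rw [aux_calA_zero, aux_fI_zero_right, hy]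
    simp [inner_zero_right]
  have hxpos : 0 < frobNorm X := lt_of_le_of_ne (aux_frobNorm_nonneg X) (Ne.symm hx)
  have hypos : 0 < frobNorm Y := lt_of_le_of_ne (aux_frobNorm_nonneg Y) (Ne.symm hy)
  set c := Real.sqrt (frobNorm Y / frobNorm X) with hcdef
  have hcpos : 0 < c := Real.sqrt_pos.2 (div_pos hypos hxpos)
  have hc2 : c ^ 2 = frobNorm Y / frobNorm X :=
    Real.sq_sqrt (le_of_lt (div_pos hypos hxpos))
  have h := aux_cross0 hR (X := c • X) (Y := c⁻¹ • Y)
    (le_trans (aux_rank_smul_le c X) hX) (le_trans (aux_rank_smul_le c⁻¹ Y) hY)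
  have e1' : ⟪calA A (c • X), calA A (c⁻¹ • Y)⟫ = ⟪calA A X, calA A Y⟫ := by
    rw [aux_calA_smul, aux_calA_smul, real_inner_smul_left, real_inner_smul_right]
    rw [← mul_assoc, mul_inv_cancel₀ (ne_of_gt hcpos), one_mul]
  have e2' : frobInner (c • X) (c⁻¹ • Y) = frobInner X Y := by
    rw [aux_fI_smul_left, aux_fI_smul_right, ← mul_assoc,
      mul_inv_cancel₀ (ne_of_gt hcpos), one_mul]
  have e3' : frobNorm (c • X) ^ 2 = c ^ 2 * frobNorm X ^ 2 := by
    rw [aux_frobNorm_sq, aux_frobNorm_sq, aux_fI_smul_left, aux_fI_smul_right]; ring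
  have e4' : frobNorm (c⁻¹ • Y) ^ 2 = (c⁻¹) ^ 2 * frobNorm Y ^ 2 := by
    rw [aux_frobNorm_sq, aux_frobNorm_sq, aux_fI_smul_left, aux_fI_smul_right]; ring
  rw [e1', e2', e3', e4'] at h
  have key : δ / 2 * (c ^ 2 * frobNorm X ^ 2 + (c⁻¹) ^ 2 * frobNorm Y ^ 2) =
      δ * frobNorm X * frobNorm Y := by
    have hinv : (c⁻¹) ^ 2 = frobNorm X / frobNorm Y := by
      rw [inv_pow, hc2, inv_div]
    rw [hc2, hinv]
    field_simp
    ring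
  rw [key] at h
  exact h

lemma aux_ofE_e1 (h : 0 < n) :
    ofE (e1 n) = fun k : Fin n => if k = (⟨0, h⟩ : Fin n) then (1 : ℝ) else 0 := by
  funext k
  show (if (k : ℕ) = 0 then (1 : ℝ) else 0) = _
  by_cases hk : (k : ℕ) = 0
  · rw [if_pos hk, if_pos (Fin.ext hk)]
  · rw [if_neg hk, if_neg (fun hh => hk (by rw [hh]))]

lemma aux_ofE_perp (v : EuclideanSpace ℝ (Fin n)) (j : Fin n) :
    ofE (perp v) j = if (j : ℕ) = 0 then 0 else ofE v j := by
  show ofE v j - ⟪e1 n, v⟫ * ofE (e1 n) j = _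
  by_cases hj : (j : ℕ) = 0
  · rw [if_pos hj]
    have hj' : ∀ k : Fin n, ((k : ℕ) = 0) ↔ (k = j) := by
      intro k
      rw [Fin.ext_iff, hj]
    have he : ofE (e1 n) = fun k : Fin n => if k = j then (1 : ℝ) else 0 := by
      funext k
      show (if (k : ℕ) = 0 then (1 : ℝ) else 0) = _
      by_cases hk : (k : ℕ) = 0
      · rw [if_pos hk, if_pos ((hj' k).1 hk)]
      · rw [if_neg hk, if_neg (fun hh => hk ((hj' k).2 hh))]
    have hsum : ⟪e1 n, v⟫ = ofE v j := by
      rw [aux_inner_euclidean, he]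
      simp [ite_mul, Finset.sum_ite_eq']
    rw [hsum, he]
    simp
  · rw [if_neg hj]
    have he0 : ofE (e1 n) j = 0 := by
      show (if (j : ℕ) = 0 then (1 : ℝ) else 0) = 0
      rw [if_neg hj]
    rw [he0, mul_zero, sub_zero]

lemma aux_norm_perp_le (v : EuclideanSpace ℝ (Fin n)) : ‖perp v‖ ≤ ‖v‖ := by
  have h : ∀ j, ofE (perp v) j * ofE (perp v) j ≤ ofE v j * ofE v j := by
    intro j
    rw [aux_ofE_perp]
    by_cases hj : (j : ℕ) = 0
    · rw [if_pos hj]; simpa using mul_self_nonneg (ofE v j)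
    · rw [if_neg hj]
  exact aux_norm_toE_le h

lemma aux_vmv_mulVec (x : Fin n1 → ℝ) (y w : Fin n2 → ℝ) (k : Fin n1) :
    ((vecMulVec x y) *ᵥ w) k = x k * ∑ j, y j * w j := by
  simp only [Matrix.mulVec, dotProduct, Finset.mul_sum]
  exact Finset.sum_congr rfl fun j _ => by simp [Matrix.vecMulVec_apply]; ring

section Entries

variable (hn1 : 0 < n1) (hn2 : 0 < n2)

lemma aux_PM (M : Matrix (Fin n1) (Fin n2) ℝ) (i : Fin n1) (j : Fin n2) :
    (vecMulVec (ofE (e1 n1)) (ofE (e1 n1)) * M) i j =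
      (if i = (⟨0, hn1⟩ : Fin n1) then (1 : ℝ) else 0) * M ⟨0, hn1⟩ j := by
  rw [Matrix.mul_apply]
  calc ∑ k, (vecMulVec (ofE (e1 n1)) (ofE (e1 n1))) i k * M k j
      = ∑ k, (if i = (⟨0, hn1⟩ : Fin n1) then (1 : ℝ) else 0) *
          ((if k = (⟨0, hn1⟩ : Fin n1) then (1 : ℝ) else 0) * M k j) :=
        Finset.sum_congr rfl fun k _ => by
          rw [Matrix.vecMulVec_apply, aux_ofE_e1 hn1]; ring
    _ = (if i = (⟨0, hn1⟩ : Fin n1) then (1 : ℝ) else 0) *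
        ∑ k, (if k = (⟨0, hn1⟩ : Fin n1) then (1 : ℝ) else 0) * M k j := by
          rw [Finset.mul_sum]
    _ = _ := by simp [ite_mul, Finset.sum_ite_eq']

lemma aux_MQ (M : Matrix (Fin n1) (Fin n2) ℝ) (i : Fin n1) (j : Fin n2) :
    (M * vecMulVec (ofE (e1 n2)) (ofE (e1 n2))) i j =
      M i ⟨0, hn2⟩ * (if j = (⟨0, hn2⟩ : Fin n2) then (1 : ℝ) else 0) := by
  rw [Matrix.mul_apply]
  calc ∑ l, M i l * (vecMulVec (ofE (e1 n2)) (ofE (e1 n2))) l j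
      = ∑ l, ((if l = (⟨0, hn2⟩ : Fin n2) then (1 : ℝ) else 0) * M i l) *
          (if j = (⟨0, hn2⟩ : Fin n2) then (1 : ℝ) else 0) :=
        Finset.sum_congr rfl fun l _ => by
          rw [Matrix.vecMulVec_apply, aux_ofE_e1 hn2]; ring
    _ = (∑ l, (if l = (⟨0, hn2⟩ : Fin n2) then (1 : ℝ) else 0) * M i l) *
        (if j = (⟨0, hn2⟩ : Fin n2) then (1 : ℝ) else 0) := by
          rw [Finset.sum_mul]
    _ = _ := by simp [ite_mul, Finset.sum_ite_eq']

lemma aux_Omat_apply (M : Matrix (Fin n1) (Fin n2) ℝ) (i : Fin n1) (j : Fin n2) :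
    Omat M i j = if i = (⟨0, hn1⟩ : Fin n1) then
        (if j = (⟨0, hn2⟩ : Fin n2) then 0 else M i j)
      else (if j = (⟨0, hn2⟩ : Fin n2) then M i j else 0) := by
  have expand : Omat M =
      (vecMulVec (ofE (e1 n1)) (ofE (e1 n1)) * M
        - vecMulVec (ofE (e1 n1)) (ofE (e1 n1)) * M * vecMulVec (ofE (e1 n2)) (ofE (e1 n2)))
      + (M * vecMulVec (ofE (e1 n2)) (ofE (e1 n2))
        - vecMulVec (ofE (e1 n1)) (ofE (e1 n1)) * M * vecMulVec (ofE (e1 n2)) (ofE (e1 n2))) := by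
    unfold Omat
    rw [Matrix.mul_sub, Matrix.mul_one, Matrix.sub_mul, Matrix.one_mul, Matrix.sub_mul]
  rw [expand]
  have hPMQ : (vecMulVec (ofE (e1 n1)) (ofE (e1 n1)) * M * vecMulVec (ofE (e1 n2)) (ofE (e1 n2))) i j
      = ((if i = (⟨0, hn1⟩ : Fin n1) then (1 : ℝ) else 0) * M ⟨0, hn1⟩ ⟨0, hn2⟩) *
        (if j = (⟨0, hn2⟩ : Fin n2) then (1 : ℝ) else 0) := by
    rw [aux_MQ hn2, aux_PM hn1]
  rw [Matrix.add_apply, Matrix.sub_apply, Matrix.sub_apply, hPMQ, aux_PM hn1, aux_MQ hn2]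
  by_cases hi : i = (⟨0, hn1⟩ : Fin n1) <;> by_cases hj : j = (⟨0, hn2⟩ : Fin n2) <;>
    simp [hi, hj]

lemma aux_Dmat_apply (M : Matrix (Fin n1) (Fin n2) ℝ) (i : Fin n1) (j : Fin n2) :
    Dmat M i j = if i = (⟨0, hn1⟩ : Fin n1) then
        (if j = (⟨0, hn2⟩ : Fin n2) then M i j else 0)
      else (if j = (⟨0, hn2⟩ : Fin n2) then 0 else M i j) := by
  have expand : Dmat M =
      vecMulVec (ofE (e1 n1)) (ofE (e1 n1)) * M * vecMulVec (ofE (e1 n2)) (ofE (e1 n2))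
      + ((M - vecMulVec (ofE (e1 n1)) (ofE (e1 n1)) * M)
        - (M * vecMulVec (ofE (e1 n2)) (ofE (e1 n2))
           - vecMulVec (ofE (e1 n1)) (ofE (e1 n1)) * M * vecMulVec (ofE (e1 n2)) (ofE (e1 n2)))) := by
    unfold Dmat
    rw [Matrix.sub_mul, Matrix.one_mul, Matrix.mul_sub, Matrix.mul_one, Matrix.sub_mul]
  rw [expand]
  have hPMQ : (vecMulVec (ofE (e1 n1)) (ofE (e1 n1)) * M * vecMulVec (ofE (e1 n2)) (ofE (e1 n2))) i j
      = ((if i = (⟨0, hn1⟩ : Fin n1) then (1 : ℝ) else 0) * M ⟨0, hn1⟩ ⟨0, hn2⟩) *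
        (if j = (⟨0, hn2⟩ : Fin n2) then (1 : ℝ) else 0) := by
    rw [aux_MQ hn2, aux_PM hn1]
  rw [Matrix.add_apply, Matrix.sub_apply, Matrix.sub_apply, Matrix.sub_apply, hPMQ,
    aux_PM hn1, aux_MQ hn2]
  by_cases hi : i = (⟨0, hn1⟩ : Fin n1) <;> by_cases hj : j = (⟨0, hn2⟩ : Fin n2) <;>
    simp [hi, hj]

end Entries

lemma aux_inner_eq_fI_adj (A : Fin m → Matrix (Fin n1) (Fin n2) ℝ)
    (X Y : Matrix (Fin n1) (Fin n2) ℝ) :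
    ⟪calA A X, calA A Y⟫ = frobInner (calAdj A (calA A Y)) X := by
  rw [aux_inner_calA]
  unfold calAdj
  rw [aux_fI_sum_left, Finset.mul_sum]
  refine Finset.sum_congr rfl fun i _ => ?_
  rw [aux_fI_smul_left]
  have hofE : ofE (calA A Y) i = (Real.sqrt m)⁻¹ * frobInner (A i) Y := rfl
  rw [hofE]
  have h : (Real.sqrt m)⁻¹ * (Real.sqrt m)⁻¹ = (m : ℝ)⁻¹ := by
    rw [← mul_inv, Real.mul_self_sqrt (Nat.cast_nonneg m)]
  rw [← h]; ring

lemma aux_toE_ofE (x : EuclideanSpace ℝ (Fin n)) : toE (ofE x) = x := rfl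

lemma aux_rank_vmv2 (x : Fin n1 → ℝ) (y : Fin n2 → ℝ) :
    (vecMulVec x y).rank ≤ 2 :=
  le_trans (aux_rank_vmv x y) one_le_two

lemma aux_small_r (δ x F : ℝ) (hδ : 0 < δ) (hδ2 : δ < 1 / 2) (hx : 0 ≤ x) (hF : 0 ≤ F)
    (h1 : x ^ 2 ≤ δ * x * F) (h2 : F ^ 2 ≤ x ^ 2 + 1) : x ≤ 1 := by
  rcases eq_or_lt_of_le hx with h0 | h0
  · rw [← h0]; norm_num
  · have ha : x ≤ δ * F := by
      have hmul : x * x ≤ (δ * F) * x := by nlinarith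
      exact le_of_mul_le_mul_right hmul h0
    have hb : x ^ 2 ≤ (δ * F) ^ 2 := pow_le_pow_left₀ hx ha 2
    have hd2 : δ ^ 2 ≤ 1 / 4 := by nlinarith
    have h5 : δ ^ 2 * F ^ 2 ≤ δ ^ 2 * (x ^ 2 + 1) :=
      mul_le_mul_of_nonneg_left h2 (sq_nonneg δ)
    nlinarith [sq_nonneg (x - 1), sq_nonneg x, sq_nonneg F]

lemma aux_mul_le_two (x y : ℝ) (hx0 : 0 ≤ x) (hx : x ≤ 2) (hy0 : 0 ≤ y) (hy : y ≤ 1) :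
    x * y ≤ 2 := by nlinarith

lemma aux_mul_le_one (x y : ℝ) (hx0 : 0 ≤ x) (hx : x ≤ 1) (hy0 : 0 ≤ y) (hy : y ≤ 1) :
    x * y ≤ 1 := by nlinarith

lemma aux_bound1 (δ D x y : ℝ) (hδ : 0 ≤ δ) (hD : 0 ≤ D) (hx0 : 0 ≤ x) (hx : x ≤ 1)
    (hy0 : 0 ≤ y) (hy : y ≤ 1) : δ * D * (x * y) ≤ δ * D := by
  have h1 : x * y ≤ 1 := aux_mul_le_one x y hx0 hx hy0 hy
  have h2 : 0 ≤ δ * D := mul_nonneg hδ hD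
  calc δ * D * (x * y) ≤ δ * D * 1 := mul_le_mul_of_nonneg_left h1 h2
    _ = δ * D := mul_one _

lemma aux_bound2 (δ a x D : ℝ) (hδ : 0 ≤ δ) (hD : 0 ≤ D) (ha0 : 0 ≤ a) (ha : a ≤ 1)
    (hx0 : 0 ≤ x) (hx : x ≤ 1) : δ * a * (x * D) ≤ δ * D := by
  have h : δ * a * (x * D) = δ * D * (a * x) := by ring
  rw [h]
  exact aux_bound1 δ D a x hδ hD ha0 ha hx0 hx

lemma aux_bound3 (δ a W b : ℝ) (hδ : 0 ≤ δ) (hW : 0 ≤ W) (ha0 : 0 ≤ a) (ha : a ≤ 1)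
    (hb0 : 0 ≤ b) (hb : b ≤ 1) : δ * a * (W * b) ≤ δ * W := by
  have h : δ * a * (W * b) = δ * W * (a * b) := by ring
  rw [h]
  exact aux_bound1 δ W a b hδ hW ha0 ha hb0 hb

lemma aux_calA_le_3 (δ X y : ℝ) (hδ : 0 < δ) (hδ2 : δ < 1 / 2) (hX : 0 ≤ X) (hy0 : 0 ≤ y)
    (hy : y ≤ 2) (h : X ^ 2 ≤ (1 + δ) * y ^ 2) : X ≤ 3 := by
  nlinarith [sq_nonneg (X - 3), sq_nonneg y]

lemma aux_sum_e1_mul (hn : 0 < n) (z : Fin n → ℝ) :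
    ∑ k, ofE (e1 n) k * z k = z ⟨0, hn⟩ := by
  rw [aux_ofE_e1 hn]
  simp [ite_mul, Finset.sum_ite_eq']

lemma aux_sum_mul_e1 (hn : 0 < n) (z : Fin n → ℝ) :
    ∑ k, z k * ofE (e1 n) k = z ⟨0, hn⟩ := by
  rw [aux_ofE_e1 hn]
  simp [mul_ite, Finset.sum_ite_eq']

lemma aux_norm_e1 (hn : 0 < n) : ‖e1 n‖ = 1 := by
  have h : ‖toE (ofE (e1 n))‖ ^ 2 = 1 := by
    rw [aux_norm_toE_sq, aux_sum_e1_mul hn, aux_ofE_e1 hn]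
    simp
  rw [aux_toE_ofE] at h
  nlinarith [norm_nonneg (e1 n)]

section Entries2

variable (hn1 : 0 < n1) (hn2 : 0 < n2)

lemma aux_Omat_mulVec_e1 (M : Matrix (Fin n1) (Fin n2) ℝ) (b : Fin n2 → ℝ)
    (hb : b ⟨0, hn2⟩ = 0) :
    (Omat M *ᵥ b) ⟨0, hn1⟩ = frobInner M (vecMulVec (ofE (e1 n1)) b) := by
  rw [aux_fI_M_vmv, aux_sum_e1_mul hn1]
  show ∑ j, Omat M ⟨0, hn1⟩ j * b j = ∑ j, M ⟨0, hn1⟩ j * b j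
  refine Finset.sum_congr rfl fun j _ => ?_
  by_cases hj : j = ⟨0, hn2⟩
  · subst hj; rw [hb]; ring
  · rw [aux_Omat_apply hn1 hn2, if_pos rfl, if_neg hj]

lemma aux_OmatT_dot (hn1 : 0 < n1) (hn2 : 0 < n2)
    (M : Matrix (Fin n1) (Fin n2) ℝ) (x : EuclideanSpace ℝ (Fin n2)) :
    ((Omat M)ᵀ *ᵥ ofE (e1 n1)) ⬝ᵥ ofE x =
      frobInner M (vecMulVec (ofE (e1 n1)) (ofE (perp x))) := by
  rw [aux_fI_M_vmv, aux_sum_e1_mul hn1]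
  show ∑ j, ((Omat M)ᵀ *ᵥ ofE (e1 n1)) j * ofE x j = ∑ j, M ⟨0, hn1⟩ j * ofE (perp x) j
  refine Finset.sum_congr rfl fun j _ => ?_
  have h1 : ((Omat M)ᵀ *ᵥ ofE (e1 n1)) j = Omat M ⟨0, hn1⟩ j := by
    show ∑ k, (Omat M)ᵀ j k * ofE (e1 n1) k = _
    rw [aux_sum_mul_e1 hn1]
    rfl
  rw [h1, aux_Omat_apply hn1 hn2, if_pos rfl, aux_ofE_perp]
  by_cases hj : j = ⟨0, hn2⟩
  · have hj0 : (j : ℕ) = 0 := by rw [hj]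
    rw [if_pos hj, if_pos hj0]
    ring
  · have hj0 : ¬((j : ℕ) = 0) := fun hc => hj (Fin.ext hc)
    rw [if_neg hj, if_neg hj0]

lemma aux_fI_Dmat (M : Matrix (Fin n1) (Fin n2) ℝ) (q : Fin n1 → ℝ) (b : Fin n2 → ℝ)
    (hq : q ⟨0, hn1⟩ = 0) (hb : b ⟨0, hn2⟩ = 0) :
    frobInner (Dmat M) (vecMulVec q b) = frobInner M (vecMulVec q b) := by
  unfold frobInner
  refine Finset.sum_congr rfl fun i _ => Finset.sum_congr rfl fun j _ => ?_
  rw [Matrix.vecMulVec_apply]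
  by_cases hi : i = ⟨0, hn1⟩
  · subst hi; rw [hq]; ring
  · by_cases hj : j = ⟨0, hn2⟩
    · subst hj; rw [hb]; ring
    · rw [aux_Dmat_apply hn1 hn2, if_neg hi, if_neg hj]

lemma aux_sum_ent_Omat (A : Fin m → Matrix (Fin n1) (Fin n2) ℝ) (b : Fin n2 → ℝ)
    (hb : b ⟨0, hn2⟩ = 0) :
    ((∑ i, ent11 (A i) • Omat (A i)) *ᵥ b) ⟨0, hn1⟩ =
      ∑ i, frobInner (A i) (vecMulVec (ofE (e1 n1)) b) *
        frobInner (A i) (vecMulVec (ofE (e1 n1)) (ofE (e1 n2))) := by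
  have h1 : ((∑ i, ent11 (A i) • Omat (A i)) *ᵥ b) ⟨0, hn1⟩ =
      ∑ i, ent11 (A i) * ((Omat (A i)) *ᵥ b) ⟨0, hn1⟩ := by
    show ∑ j, (∑ i, ent11 (A i) • Omat (A i)) ⟨0, hn1⟩ j * b j = _
    calc ∑ j, (∑ i, ent11 (A i) • Omat (A i)) ⟨0, hn1⟩ j * b j
        = ∑ j, ∑ i, ent11 (A i) * (Omat (A i) ⟨0, hn1⟩ j * b j) := by
          refine Finset.sum_congr rfl fun j _ => ?_
          rw [Matrix.sum_apply, Finset.sum_mul]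
          exact Finset.sum_congr rfl fun i _ => by
            rw [Matrix.smul_apply, smul_eq_mul]; ring
      _ = ∑ i, ∑ j, ent11 (A i) * (Omat (A i) ⟨0, hn1⟩ j * b j) := Finset.sum_comm
      _ = ∑ i, ent11 (A i) * ((Omat (A i)) *ᵥ b) ⟨0, hn1⟩ := by
          refine Finset.sum_congr rfl fun i _ => ?_
          rw [← Finset.mul_sum]
          rfl
  rw [h1]
  refine Finset.sum_congr rfl fun i _ => ?_
  rw [aux_Omat_mulVec_e1 hn1 hn2 _ _ hb]
  have h2 : ent11 (A i) = frobInner (A i) (vecMulVec (ofE (e1 n1)) (ofE (e1 n2))) :=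
    aux_fI_comm _ _
  rw [h2]
  ring

end Entries2

end AuxLemmas

set_option maxHeartbeats 1600000 in
/-- Lemma `nearindependencebounds`. -/
theorem statement9 (K : ℝ) (hK : 1 ≤ K) :
    ∃ C : ℝ, 0 < C ∧
      ∀ (n1 n2 m : ℕ) (T : ℕ) (η δ : ℝ), 0 < η → 0 < δ → δ < 1 / 2 →
      ∀ (A : Fin m → Matrix (Fin n1) (Fin n2) ℝ),
      ∀ (v vt : EuclideanSpace ℝ (Fin n2)), ‖v‖ = 1 → ‖vt‖ = 1 →
      ∀ (ut : EuclideanSpace ℝ (Fin n1)), ‖ut‖ ≤ 2 →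
      ∀ (u : EuclideanSpace ℝ (Fin n1)), NormalEq A u v →
      HasRIP A δ →
      (1 / (m : ℝ)) * ‖toE ((∑ i, ent11 (A i) • Omat (A i)) *ᵥ ofE (perp vt))‖
          ≤ K * Real.sqrt ((Real.log T + Real.log η) / m) * ‖perp vt‖ →
      (1 / (m : ℝ)) *
          |∑ i, (((Omat (A i))ᵀ *ᵥ ofE (e1 n1)) ⬝ᵥ ofE vt) *
            frobInner (Dmat (A i)) (vecMulVec (ofE (perp ut)) (ofE (perp vt)))|
        ≤ K * Real.sqrt ((Real.log T + Real.log η) / m) *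
            ‖calA A (vecMulVec (ofE (perp ut)) (ofE (perp vt)))‖ →
      |⟪calA A (vecMulVec (ofE (e1 n1)) (ofE (perp v))),
          calA A (vecMulVec (ofE (e1 n1)) (ofE (e1 n2)))⟫|
        ≤ δ * ‖perp v - perp vt‖ + C * Real.sqrt ((Real.log T + Real.log η) / m) ∧
      |⟪calA A (vecMulVec (ofE (e1 n1)) (ofE (perp v))),
          calA A (vecMulVec (ofE (perp u)) (ofE (perp v)))⟫|
        ≤ δ * ‖perp u - perp ut‖ + 2 * δ * ‖perp v - perp vt‖
          + C * Real.sqrt ((Real.log T + Real.log η) / m) := by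
  have hK0 : (0 : ℝ) < K := lt_of_lt_of_le one_pos hK
  refine ⟨3 * K, by linarith, ?_⟩
  intro n1 n2 m T η δ hη hδ hδ2 A v vt hv hvt ut hut u hNE hRIP hH1 hH2
  have hδ0 : (0 : ℝ) ≤ δ := le_of_lt hδ
  set ε : ℝ := Real.sqrt ((Real.log T + Real.log η) / m) with hεdef
  have hε0 : 0 ≤ ε := Real.sqrt_nonneg _
  have hKε : 0 ≤ K * ε := mul_nonneg (le_of_lt hK0) hε0
  have hminv : (0 : ℝ) ≤ (m : ℝ)⁻¹ := by positivity
  -- degenerate case n1 = 0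
  rcases Nat.eq_zero_or_pos n1 with hn1 | hn1
  · subst hn1
    have hz : ∀ X Y : Matrix (Fin 0) (Fin n2) ℝ, ⟪calA A X, calA A Y⟫ = (0 : ℝ) := by
      intro X Y
      rw [aux_inner_calA]
      have hfz : ∀ i, frobInner (A i) X = 0 := fun i => by simp [frobInner]
      simp [hfz]
    have h3Kε : 0 ≤ 3 * K * ε := by linarith only [hKε]
    constructor
    · rw [hz, abs_zero]
      have h1 : 0 ≤ δ * ‖perp v - perp vt‖ := mul_nonneg hδ0 (norm_nonneg _)
      linarith only [h1, h3Kε]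
    · rw [hz, abs_zero]
      have h1 : 0 ≤ δ * ‖perp u - perp ut‖ := mul_nonneg hδ0 (norm_nonneg _)
      have h2 : 0 ≤ 2 * δ * ‖perp v - perp vt‖ := by positivity
      linarith only [h1, h2, h3Kε]
  -- n2 > 0
  have hv2 : ∑ j, ofE v j * ofE v j = 1 := by
    have h := aux_norm_toE_sq (ofE v)
    rw [aux_toE_ofE, hv] at h
    rw [← h]; norm_num
  have hn2 : 0 < n2 := by
    rcases Nat.eq_zero_or_pos n2 with h | h
    · exfalso; subst h; simp at hv2
    · exact h
  -- coordinate facts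
  have hpv0 : ofE (perp v) ⟨0, hn2⟩ = 0 := by rw [aux_ofE_perp]; simp
  have hpvt0 : ofE (perp vt) ⟨0, hn2⟩ = 0 := by rw [aux_ofE_perp]; simp
  have hpu0 : ofE (perp u) ⟨0, hn1⟩ = 0 := by rw [aux_ofE_perp]; simp
  have hput0 : ofE (perp ut) ⟨0, hn1⟩ = 0 := by rw [aux_ofE_perp]; simp
  -- norm facts
  have hne1 : ‖e1 n1‖ = 1 := aux_norm_e1 hn1
  have hne2 : ‖e1 n2‖ = 1 := aux_norm_e1 hn2
  have hna : ‖perp v‖ ≤ 1 := le_trans (aux_norm_perp_le v) (le_of_eq hv)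
  have hnb : ‖perp vt‖ ≤ 1 := le_trans (aux_norm_perp_le vt) (le_of_eq hvt)
  have hnq : ‖perp ut‖ ≤ 2 := le_trans (aux_norm_perp_le ut) hut
  ----------------------------------------------------------------
  -- Normal equation: ‖perp u‖ ≤ 1
  ----------------------------------------------------------------
  have hNE2 : u = ⟪v, e1 n2⟫ • e1 n1 +
      toE (((vecMulVec (ofE u) (ofE v) - vecMulVec (ofE (e1 n1)) (ofE (e1 n2))) -
        calAdj A (calA A (vecMulVec (ofE u) (ofE v) - vecMulVec (ofE (e1 n1)) (ofE (e1 n2)))))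
          *ᵥ ofE v) := hNE
  set α : ℝ := ⟪v, e1 n2⟫ with hα
  set Δ : Matrix (Fin n1) (Fin n2) ℝ :=
    vecMulVec (ofE u) (ofE v) - vecMulVec (ofE (e1 n1)) (ofE (e1 n2)) with hΔdef
  set r : Fin n1 → ℝ := fun k => ofE u k - α * ofE (e1 n1) k with hrdef
  have hse2v : ∑ j, ofE (e1 n2) j * ofE v j = α := by
    rw [aux_sum_e1_mul hn2, hα, aux_inner_euclidean, aux_sum_mul_e1 hn2]
  have hsve2 : ∑ j, ofE v j * ofE (e1 n2) j = α := by
    rw [aux_sum_mul_e1 hn2, hα, aux_inner_euclidean, aux_sum_mul_e1 hn2]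
  have hΔv : ∀ k, (Δ *ᵥ ofE v) k = r k := by
    intro k
    rw [hΔdef, Matrix.sub_mulVec]
    show (vecMulVec (ofE u) (ofE v) *ᵥ ofE v) k
        - (vecMulVec (ofE (e1 n1)) (ofE (e1 n2)) *ᵥ ofE v) k = r k
    rw [aux_vmv_mulVec, aux_vmv_mulVec, hv2, hse2v]
    show ofE u k * 1 - ofE (e1 n1) k * α = ofE u k - α * ofE (e1 n1) k
    ring
  have hgv : ∀ k, (calAdj A (calA A Δ) *ᵥ ofE v) k = 0 := by
    intro k
    have h2 : ofE u k = α * ofE (e1 n1) k +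
        ((Δ - calAdj A (calA A Δ)) *ᵥ ofE v) k := by
      conv_lhs => rw [hNE2]
      rfl
    rw [Matrix.sub_mulVec, Pi.sub_apply, hΔv k] at h2
    have hr : r k = ofE u k - α * ofE (e1 n1) k := rfl
    linarith only [h2, hr]
  have hE : ∀ w : Fin n1 → ℝ, ⟪calA A (vecMulVec w (ofE v)), calA A Δ⟫ = 0 := by
    intro w
    rw [aux_inner_eq_fI_adj, aux_fI_M_vmv]
    simp [hgv]
  have hrankΔ : Δ.rank ≤ 2 := by
    rw [hΔdef]
    have h1 := aux_rank_vmv (ofE u) (ofE v)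
    have h2 := aux_rank_vmv (ofE (e1 n1)) (ofE (e1 n2))
    exact le_trans (aux_rank_sub_le _ _) (by omega)
  have hsum_rr : frobInner (vecMulVec r (ofE v)) Δ = ∑ k, r k * r k := by
    rw [aux_fI_comm, aux_fI_M_vmv]
    exact Finset.sum_congr rfl fun k _ => by rw [hΔv k]
  have hcr := aux_cross hδ0 hRIP (aux_rank_vmv2 r (ofE v)) hrankΔ
  rw [hE r, hsum_rr, zero_sub, abs_neg] at hcr
  have hfr : frobNorm (vecMulVec r (ofE v)) = ‖toE r‖ := by
    rw [aux_frobNorm_vmv, aux_toE_ofE, hv, mul_one]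
  rw [hfr] at hcr
  have hr_le : ‖toE r‖ ^ 2 ≤ δ * ‖toE r‖ * frobNorm Δ := by
    rw [aux_norm_toE_sq]
    exact le_trans (le_abs_self _) hcr
  have he1i0 : ofE (e1 n1) ⟨0, hn1⟩ = 1 := by rw [aux_ofE_e1 hn1]; simp
  have hfΔΔ : frobInner Δ Δ = (∑ k, r k * r k) + 1 - α ^ 2 := by
    have h_e2e2 : ∑ j, ofE (e1 n2) j * ofE (e1 n2) j = 1 := by
      rw [aux_sum_e1_mul hn2, aux_ofE_e1 hn2]; simp
    have h_e1e1 : ∑ i, ofE (e1 n1) i * ofE (e1 n1) i = 1 := by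
      rw [aux_sum_e1_mul hn1, aux_ofE_e1 hn1]; simp
    have h_ue1 : ∑ i, ofE u i * ofE (e1 n1) i = r ⟨0, hn1⟩ + α := by
      rw [aux_sum_mul_e1 hn1]
      show ofE u ⟨0, hn1⟩ = (ofE u ⟨0, hn1⟩ - α * ofE (e1 n1) ⟨0, hn1⟩) + α
      rw [he1i0]; ring
    have h_e1u : ∑ i, ofE (e1 n1) i * ofE u i = r ⟨0, hn1⟩ + α := by
      rw [aux_sum_e1_mul hn1]
      show ofE u ⟨0, hn1⟩ = (ofE u ⟨0, hn1⟩ - α * ofE (e1 n1) ⟨0, hn1⟩) + α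
      rw [he1i0]; ring
    have h_uu : ∑ i, ofE u i * ofE u i =
        (∑ k, r k * r k) + 2 * α * (r ⟨0, hn1⟩) + α ^ 2 := by
      have hu : ∀ k, ofE u k = r k + α * ofE (e1 n1) k := fun k => by
        show ofE u k = (ofE u k - α * ofE (e1 n1) k) + α * ofE (e1 n1) k
        ring
      calc ∑ i, ofE u i * ofE u i
          = ∑ i, (r i * r i + 2 * α * (ofE (e1 n1) i * r i)
              + α ^ 2 * (ofE (e1 n1) i * ofE (e1 n1) i)) :=
            Finset.sum_congr rfl fun i _ => by rw [hu i]; ring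
        _ = (∑ i, r i * r i) + 2 * α * (∑ i, ofE (e1 n1) i * r i)
              + α ^ 2 * (∑ i, ofE (e1 n1) i * ofE (e1 n1) i) := by
            rw [Finset.sum_add_distrib, Finset.sum_add_distrib, ← Finset.mul_sum,
              ← Finset.mul_sum]
        _ = (∑ k, r k * r k) + 2 * α * (r ⟨0, hn1⟩) + α ^ 2 := by
            rw [aux_sum_e1_mul hn1, h_e1e1]; ring
    rw [hΔdef, aux_fI_sub_left, aux_fI_sub_right, aux_fI_sub_right, aux_fI_vmv,
      aux_fI_vmv, aux_fI_vmv, aux_fI_vmv, hv2, h_e2e2, h_e1e1, h_ue1, h_e1u, h_uu,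
      hsve2, hse2v]
    ring
  have hΔsq : frobNorm Δ ^ 2 ≤ ‖toE r‖ ^ 2 + 1 := by
    rw [aux_frobNorm_sq, hfΔΔ, ← aux_norm_toE_sq]
    linarith only [sq_nonneg α]
  have hnr : ‖toE r‖ ≤ 1 :=
    aux_small_r δ (‖toE r‖) (frobNorm Δ) hδ hδ2 (norm_nonneg _) (aux_frobNorm_nonneg Δ)
      hr_le hΔsq
  have hnp : ‖perp u‖ ≤ 1 := by
    have hcomp : ∀ k, ofE (perp u) k * ofE (perp u) k ≤ r k * r k := by
      intro k
      rw [aux_ofE_perp]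
      by_cases hk : (k : ℕ) = 0
      · rw [if_pos hk]; simpa using mul_self_nonneg (r k)
      · rw [if_neg hk]
        have he0 : ofE (e1 n1) k = 0 := by
          show (if (k : ℕ) = 0 then (1 : ℝ) else 0) = 0
          rw [if_neg hk]
        have hrk : r k = ofE u k := by
          show ofE u k - α * ofE (e1 n1) k = ofE u k
          rw [he0]; ring
        rw [hrk]
    calc ‖perp u‖ = ‖toE (ofE (perp u))‖ := by rw [aux_toE_ofE]
      _ ≤ ‖toE r‖ := aux_norm_toE_le hcomp
      _ ≤ 1 := hnr
  ----------------------------------------------------------------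
  -- abbreviations for difference vectors
  ----------------------------------------------------------------
  set d : Fin n2 → ℝ := fun j => ofE (perp v) j - ofE (perp vt) j with hddef
  set w2 : Fin n1 → ℝ := fun i => ofE (perp u) i - ofE (perp ut) i with hwdef
  have hd0 : d ⟨0, hn2⟩ = 0 := by
    show ofE (perp v) ⟨0, hn2⟩ - ofE (perp vt) ⟨0, hn2⟩ = 0
    rw [hpv0, hpvt0]; ring
  have hw0 : w2 ⟨0, hn1⟩ = 0 := by
    show ofE (perp u) ⟨0, hn1⟩ - ofE (perp ut) ⟨0, hn1⟩ = 0
    rw [hpu0, hput0]; ring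
  have htoEd : ‖toE d‖ = ‖perp v - perp vt‖ := rfl
  have htoEw : ‖toE w2‖ = ‖perp u - perp ut‖ := rfl
  have hdm : vecMulVec (ofE (e1 n1)) (ofE (perp v)) =
      vecMulVec (ofE (e1 n1)) d + vecMulVec (ofE (e1 n1)) (ofE (perp vt)) := by
    ext i j
    show ofE (e1 n1) i * ofE (perp v) j = _
    rw [Matrix.add_apply, Matrix.vecMulVec_apply, Matrix.vecMulVec_apply]
    show _ = ofE (e1 n1) i * (ofE (perp v) j - ofE (perp vt) j)
        + ofE (e1 n1) i * ofE (perp vt) j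
    ring
  have hfn_e1d : frobNorm (vecMulVec (ofE (e1 n1)) d) = ‖perp v - perp vt‖ := by
    rw [aux_frobNorm_vmv, aux_toE_ofE, hne1, one_mul, htoEd]
  have hfn_e1b : frobNorm (vecMulVec (ofE (e1 n1)) (ofE (perp vt))) = ‖perp vt‖ := by
    rw [aux_frobNorm_vmv, aux_toE_ofE, aux_toE_ofE, hne1, one_mul]
  refine ⟨?_, ?_⟩
  ----------------------------------------------------------------
  -- Part (a)
  ----------------------------------------------------------------
  · have hsplita : ⟪calA A (vecMulVec (ofE (e1 n1)) (ofE (perp v))),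
        calA A (vecMulVec (ofE (e1 n1)) (ofE (e1 n2)))⟫ =
        ⟪calA A (vecMulVec (ofE (e1 n1)) d),
          calA A (vecMulVec (ofE (e1 n1)) (ofE (e1 n2)))⟫
        + ⟪calA A (vecMulVec (ofE (e1 n1)) (ofE (perp vt))),
          calA A (vecMulVec (ofE (e1 n1)) (ofE (e1 n2)))⟫ := by
      rw [hdm, aux_calA_add, inner_add_left]
    have hT1 : |⟪calA A (vecMulVec (ofE (e1 n1)) d),
        calA A (vecMulVec (ofE (e1 n1)) (ofE (e1 n2)))⟫| ≤ δ * ‖perp v - perp vt‖ := by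
      have hfI : frobInner (vecMulVec (ofE (e1 n1)) d)
          (vecMulVec (ofE (e1 n1)) (ofE (e1 n2))) = 0 := by
        rw [aux_fI_vmv]
        have hd0' : ∑ j, d j * ofE (e1 n2) j = 0 := by
          rw [aux_sum_mul_e1 hn2, hd0]
        rw [hd0', mul_zero]
      have hc := aux_cross hδ0 hRIP (aux_rank_vmv2 (ofE (e1 n1)) d)
        (aux_rank_vmv2 (ofE (e1 n1)) (ofE (e1 n2)))
      rw [hfI, sub_zero] at hc
      have hf2 : frobNorm (vecMulVec (ofE (e1 n1)) (ofE (e1 n2))) = 1 := by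
        rw [aux_frobNorm_vmv, aux_toE_ofE, aux_toE_ofE, hne1, hne2]; norm_num
      rw [hfn_e1d, hf2, mul_one] at hc
      exact hc
    have hT2 : |⟪calA A (vecMulVec (ofE (e1 n1)) (ofE (perp vt))),
        calA A (vecMulVec (ofE (e1 n1)) (ofE (e1 n2)))⟫| ≤ K * ε := by
      have hid : ⟪calA A (vecMulVec (ofE (e1 n1)) (ofE (perp vt))),
          calA A (vecMulVec (ofE (e1 n1)) (ofE (e1 n2)))⟫ =
          (m : ℝ)⁻¹ * ((∑ i, ent11 (A i) • Omat (A i)) *ᵥ ofE (perp vt)) ⟨0, hn1⟩ := by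
        rw [aux_inner_calA, aux_sum_ent_Omat hn1 hn2 A (ofE (perp vt)) hpvt0]
      rw [hid]
      have h1 : |(m : ℝ)⁻¹ * ((∑ i, ent11 (A i) • Omat (A i)) *ᵥ ofE (perp vt)) ⟨0, hn1⟩|
          ≤ (m : ℝ)⁻¹ * ‖toE ((∑ i, ent11 (A i) • Omat (A i)) *ᵥ ofE (perp vt))‖ := by
        rw [abs_mul, abs_of_nonneg hminv]
        exact mul_le_mul_of_nonneg_left (aux_coord_le_norm _ _) hminv
      have h2 : (m : ℝ)⁻¹ * ‖toE ((∑ i, ent11 (A i) • Omat (A i)) *ᵥ ofE (perp vt))‖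
          ≤ K * ε * ‖perp vt‖ := by
        rw [show (m : ℝ)⁻¹ = 1 / (m : ℝ) from (one_div _).symm]
        exact hH1
      have h3 : K * ε * ‖perp vt‖ ≤ K * ε :=
        le_trans (mul_le_mul_of_nonneg_left hnb hKε) (by rw [mul_one])
      linarith only [h1, h2, h3]
    rw [hsplita]
    refine le_trans (abs_add_le _ _) ?_
    have h3 : K * ε ≤ 3 * K * ε := by linarith only [hKε]
    linarith only [hT1, hT2, h3]
  ----------------------------------------------------------------
  -- Part (b)
  ----------------------------------------------------------------
  · have hm2 : vecMulVec (ofE (perp u)) (ofE (perp v)) =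
        vecMulVec (ofE (perp u)) d + (vecMulVec w2 (ofE (perp vt))
          + vecMulVec (ofE (perp ut)) (ofE (perp vt))) := by
      ext i j
      show ofE (perp u) i * ofE (perp v) j = _
      rw [Matrix.add_apply, Matrix.add_apply, Matrix.vecMulVec_apply,
        Matrix.vecMulVec_apply, Matrix.vecMulVec_apply]
      show _ = ofE (perp u) i * (ofE (perp v) j - ofE (perp vt) j)
          + ((ofE (perp u) i - ofE (perp ut) i) * ofE (perp vt) j
            + ofE (perp ut) i * ofE (perp vt) j)
      ring
    have hsplitb : ⟪calA A (vecMulVec (ofE (e1 n1)) (ofE (perp v))),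
        calA A (vecMulVec (ofE (perp u)) (ofE (perp v)))⟫ =
        ⟪calA A (vecMulVec (ofE (e1 n1)) d),
          calA A (vecMulVec (ofE (perp u)) (ofE (perp v)))⟫
        + (⟪calA A (vecMulVec (ofE (e1 n1)) (ofE (perp vt))),
            calA A (vecMulVec (ofE (perp u)) d)⟫
          + (⟪calA A (vecMulVec (ofE (e1 n1)) (ofE (perp vt))),
              calA A (vecMulVec w2 (ofE (perp vt)))⟫
            + ⟪calA A (vecMulVec (ofE (e1 n1)) (ofE (perp vt))),
              calA A (vecMulVec (ofE (perp ut)) (ofE (perp vt)))⟫)) := by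
      have step1 : ⟪calA A (vecMulVec (ofE (e1 n1)) (ofE (perp v))),
          calA A (vecMulVec (ofE (perp u)) (ofE (perp v)))⟫ =
          ⟪calA A (vecMulVec (ofE (e1 n1)) d),
            calA A (vecMulVec (ofE (perp u)) (ofE (perp v)))⟫
          + ⟪calA A (vecMulVec (ofE (e1 n1)) (ofE (perp vt))),
            calA A (vecMulVec (ofE (perp u)) (ofE (perp v)))⟫ := by
        rw [hdm, aux_calA_add, inner_add_left]
      have step2 : ⟪calA A (vecMulVec (ofE (e1 n1)) (ofE (perp vt))),
          calA A (vecMulVec (ofE (perp u)) (ofE (perp v)))⟫ =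
          ⟪calA A (vecMulVec (ofE (e1 n1)) (ofE (perp vt))),
            calA A (vecMulVec (ofE (perp u)) d)⟫
          + (⟪calA A (vecMulVec (ofE (e1 n1)) (ofE (perp vt))),
              calA A (vecMulVec w2 (ofE (perp vt)))⟫
            + ⟪calA A (vecMulVec (ofE (e1 n1)) (ofE (perp vt))),
              calA A (vecMulVec (ofE (perp ut)) (ofE (perp vt)))⟫) := by
        rw [hm2, aux_calA_add, aux_calA_add, inner_add_right, inner_add_right]
      rw [step1, step2]
    have hpa : ‖perp u‖ * ‖perp v‖ ≤ 1 :=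
      aux_mul_le_one _ _ (norm_nonneg _) hnp (norm_nonneg _) hna
    have hB1 : |⟪calA A (vecMulVec (ofE (e1 n1)) d),
        calA A (vecMulVec (ofE (perp u)) (ofE (perp v)))⟫| ≤ δ * ‖perp v - perp vt‖ := by
      have hfI : frobInner (vecMulVec (ofE (e1 n1)) d)
          (vecMulVec (ofE (perp u)) (ofE (perp v))) = 0 := by
        rw [aux_fI_vmv]
        have h0 : ∑ i, ofE (e1 n1) i * ofE (perp u) i = 0 := by
          rw [aux_sum_e1_mul hn1, hpu0]
        rw [h0, zero_mul]
      have hc := aux_cross hδ0 hRIP (aux_rank_vmv2 (ofE (e1 n1)) d)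
        (aux_rank_vmv2 (ofE (perp u)) (ofE (perp v)))
      rw [hfI, sub_zero, hfn_e1d] at hc
      have hf2 : frobNorm (vecMulVec (ofE (perp u)) (ofE (perp v)))
          = ‖perp u‖ * ‖perp v‖ := by
        rw [aux_frobNorm_vmv, aux_toE_ofE, aux_toE_ofE]
      rw [hf2] at hc
      have hD0 : 0 ≤ δ * ‖perp v - perp vt‖ := mul_nonneg hδ0 (norm_nonneg _)
      calc |⟪calA A (vecMulVec (ofE (e1 n1)) d),
            calA A (vecMulVec (ofE (perp u)) (ofE (perp v)))⟫|
          ≤ δ * ‖perp v - perp vt‖ * (‖perp u‖ * ‖perp v‖) := hc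
        _ ≤ δ * ‖perp v - perp vt‖ * 1 := mul_le_mul_of_nonneg_left hpa hD0
        _ = δ * ‖perp v - perp vt‖ := by rw [mul_one]
    have hB2 : |⟪calA A (vecMulVec (ofE (e1 n1)) (ofE (perp vt))),
        calA A (vecMulVec (ofE (perp u)) d)⟫| ≤ δ * ‖perp v - perp vt‖ := by
      have hfI : frobInner (vecMulVec (ofE (e1 n1)) (ofE (perp vt)))
          (vecMulVec (ofE (perp u)) d) = 0 := by
        rw [aux_fI_vmv]
        have h0 : ∑ i, ofE (e1 n1) i * ofE (perp u) i = 0 := by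
          rw [aux_sum_e1_mul hn1, hpu0]
        rw [h0, zero_mul]
      have hc := aux_cross hδ0 hRIP (aux_rank_vmv2 (ofE (e1 n1)) (ofE (perp vt)))
        (aux_rank_vmv2 (ofE (perp u)) d)
      rw [hfI, sub_zero, hfn_e1b] at hc
      have hf2 : frobNorm (vecMulVec (ofE (perp u)) d)
          = ‖perp u‖ * ‖perp v - perp vt‖ := by
        rw [aux_frobNorm_vmv, aux_toE_ofE, htoEd]
      rw [hf2] at hc
      exact le_trans hc (aux_bound2 δ _ _ _ hδ0 (norm_nonneg _) (norm_nonneg _) hnb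
        (norm_nonneg _) hnp)
    have hB3 : |⟪calA A (vecMulVec (ofE (e1 n1)) (ofE (perp vt))),
        calA A (vecMulVec w2 (ofE (perp vt)))⟫| ≤ δ * ‖perp u - perp ut‖ := by
      have hfI : frobInner (vecMulVec (ofE (e1 n1)) (ofE (perp vt)))
          (vecMulVec w2 (ofE (perp vt))) = 0 := by
        rw [aux_fI_vmv]
        have h0 : ∑ i, ofE (e1 n1) i * w2 i = 0 := by
          rw [aux_sum_e1_mul hn1, hw0]
        rw [h0, zero_mul]
      have hc := aux_cross hδ0 hRIP (aux_rank_vmv2 (ofE (e1 n1)) (ofE (perp vt)))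
        (aux_rank_vmv2 w2 (ofE (perp vt)))
      rw [hfI, sub_zero, hfn_e1b] at hc
      have hf2 : frobNorm (vecMulVec w2 (ofE (perp vt)))
          = ‖perp u - perp ut‖ * ‖perp vt‖ := by
        rw [aux_frobNorm_vmv, aux_toE_ofE, htoEw]
      rw [hf2] at hc
      exact le_trans hc (aux_bound3 δ _ _ _ hδ0 (norm_nonneg _) (norm_nonneg _) hnb
        (norm_nonneg _) hnb)
    have hAq : ‖calA A (vecMulVec (ofE (perp ut)) (ofE (perp vt)))‖ ≤ 3 := by
      have h := (hRIP _ (le_trans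
        (aux_rank_vmv (ofE (perp ut)) (ofE (perp vt))) (by norm_num))).2
      rw [aux_frobNorm_vmv, aux_toE_ofE, aux_toE_ofE] at h
      have hqb : ‖perp ut‖ * ‖perp vt‖ ≤ 2 :=
        aux_mul_le_two _ _ (norm_nonneg _) hnq (norm_nonneg _) hnb
      have hqb0 : 0 ≤ ‖perp ut‖ * ‖perp vt‖ :=
        mul_nonneg (norm_nonneg _) (norm_nonneg _)
      exact aux_calA_le_3 δ _ _ hδ hδ2 (norm_nonneg _) hqb0 hqb h
    have hB4 : |⟪calA A (vecMulVec (ofE (e1 n1)) (ofE (perp vt))),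
        calA A (vecMulVec (ofE (perp ut)) (ofE (perp vt)))⟫| ≤ 3 * (K * ε) := by
      have hanch : ⟪calA A (vecMulVec (ofE (e1 n1)) (ofE (perp vt))),
          calA A (vecMulVec (ofE (perp ut)) (ofE (perp vt)))⟫ =
          (m : ℝ)⁻¹ * ∑ i, (((Omat (A i))ᵀ *ᵥ ofE (e1 n1)) ⬝ᵥ ofE vt) *
            frobInner (Dmat (A i)) (vecMulVec (ofE (perp ut)) (ofE (perp vt))) := by
        rw [aux_inner_calA]
        congr 1
        refine Finset.sum_congr rfl fun i _ => ?_
        rw [aux_OmatT_dot hn1 hn2 (A i) vt, aux_fI_Dmat hn1 hn2 (A i) _ _ hput0 hpvt0]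
      rw [hanch]
      have h1 : |(m : ℝ)⁻¹ * ∑ i, (((Omat (A i))ᵀ *ᵥ ofE (e1 n1)) ⬝ᵥ ofE vt) *
            frobInner (Dmat (A i)) (vecMulVec (ofE (perp ut)) (ofE (perp vt)))|
          ≤ K * ε * ‖calA A (vecMulVec (ofE (perp ut)) (ofE (perp vt)))‖ := by
        rw [abs_mul, abs_of_nonneg hminv]
        rw [show (m : ℝ)⁻¹ = 1 / (m : ℝ) from (one_div _).symm]
        exact hH2
      have h2 : K * ε * ‖calA A (vecMulVec (ofE (perp ut)) (ofE (perp vt)))‖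
          ≤ K * ε * 3 := mul_le_mul_of_nonneg_left hAq hKε
      linarith only [h1, h2]
    rw [hsplitb]
    have habs := abs_add_le
      (⟪calA A (vecMulVec (ofE (e1 n1)) d),
        calA A (vecMulVec (ofE (perp u)) (ofE (perp v)))⟫)
      (⟪calA A (vecMulVec (ofE (e1 n1)) (ofE (perp vt))),
          calA A (vecMulVec (ofE (perp u)) d)⟫
        + (⟪calA A (vecMulVec (ofE (e1 n1)) (ofE (perp vt))),
            calA A (vecMulVec w2 (ofE (perp vt)))⟫
          + ⟪calA A (vecMulVec (ofE (e1 n1)) (ofE (perp vt))),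
            calA A (vecMulVec (ofE (perp ut)) (ofE (perp vt)))⟫))
    have habs2 := abs_add_le
      (⟪calA A (vecMulVec (ofE (e1 n1)) (ofE (perp vt))),
        calA A (vecMulVec (ofE (perp u)) d)⟫)
      (⟪calA A (vecMulVec (ofE (e1 n1)) (ofE (perp vt))),
          calA A (vecMulVec w2 (ofE (perp vt)))⟫
        + ⟪calA A (vecMulVec (ofE (e1 n1)) (ofE (perp vt))),
          calA A (vecMulVec (ofE (perp ut)) (ofE (perp vt)))⟫)
    have habs3 := abs_add_le
      (⟪calA A (vecMulVec (ofE (e1 n1)) (ofE (perp vt))),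
        calA A (vecMulVec w2 (ofE (perp vt)))⟫)
      (⟪calA A (vecMulVec (ofE (e1 n1)) (ofE (perp vt))),
        calA A (vecMulVec (ofE (perp ut)) (ofE (perp vt)))⟫)
    linarith

end ALSPaper
end
end

section
/- For all constants C₁, C₂ > 0 there exists a constant c > 0 depending only on C₁ and C₂ such that the following holds. Let n2 ≥ 16, δ = c/(4 log n2), and let t ∈ ℕ with t ≤ ⌈log n2/(4 log log n2)⌉. Let v_t ∈ ℝ^{n2} be a unit vector, and let u_{t+1/2}, ũ_{t+1/2} ∈ ℝ^{n1} be nonzero vectors; set u_{t+1} := u_{t+1/2}/‖u_{t+1/2}‖ and ũ_{t+1} := ũ_{t+1/2}/‖ũ_{t+1/2}‖. Suppose: ‖u_{t+1/2}^∥ − ũ_{t+1/2}^∥‖ ≤ (c_{2t} + C₁·δ·(1+c_{2t}))·‖v_t^∥‖; ‖u_{t+1/2}^⊥ − ũ_{t+1/2}^⊥‖ ≤ C₁·δ·(1+c_{2t})·‖v_t^∥‖; (1 − C₂·δ·(1+c_{2t}))·‖u_{t+1/2}^∥‖ ≤ ‖v_t^∥‖ ≤ (1 + C₂·δ·(1+c_{2t}))·‖u_{t+1/2}^∥‖;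 and ‖u_{t+1}^∥‖ < c/log n2. Then max{ ‖u_{t+1}^∥ − ũ_{t+1}^∥‖, ‖u_{t+1}^⊥ − ũ_{t+1}^⊥‖ } ≤ c_{2t+1}·‖u_{t+1}^∥‖. -/
open MeasureTheory ProbabilityTheory Matrix Finset
open scoped BigOperators ENNReal NNReal RealInnerProductSpace

noncomputable section

namespace ALSPaper

set_option maxHeartbeats 1000000


lemma e1_eq_single (n : ℕ) (hn : 0 < n) : e1 n = EuclideanSpace.single (⟨0,hn⟩ : Fin n) 1 := by
  ext i
  simp only [e1, toE, WithLp.equiv_symm_apply, PiLp.toLp_apply, EuclideanSpace.single_apply]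
  congr 1
  simp [Fin.ext_iff]

lemma norm_e1 (n : ℕ) (hn : 0 < n) : ‖e1 n‖ = 1 := by
  rw [e1_eq_single n hn, EuclideanSpace.norm_single]; norm_num

lemma inner_e1_e1 (n : ℕ) (hn : 0 < n) : ⟪e1 n, e1 n⟫ = 1 := by
  rw [real_inner_self_eq_norm_sq, norm_e1 n hn]; norm_num

lemma par_smul {n : ℕ} (r : ℝ) (x : EuclideanSpace ℝ (Fin n)) : par (r • x) = r • par x := by
  rw [par, par, real_inner_smul_right]
  exact (smul_smul r _ _).symm

lemma perp_smul {n : ℕ} (r : ℝ) (x : EuclideanSpace ℝ (Fin n)) : perp (r • x) = r • perp x := by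
  simp [perp, par_smul, smul_sub]

lemma par_sub {n : ℕ} (x y : EuclideanSpace ℝ (Fin n)) : par (x - y) = par x - par y := by
  simp [par, inner_sub_right, sub_smul]

lemma norm_par_le {n : ℕ} (hn : 0 < n) (v : EuclideanSpace ℝ (Fin n)) : ‖par v‖ ≤ ‖v‖ := by
  rw [par, norm_smul, norm_e1 n hn, mul_one]
  calc ‖⟪e1 n, v⟫‖ = |⟪e1 n, v⟫| := rfl
  _ ≤ ‖e1 n‖ * ‖v‖ := abs_real_inner_le_norm _ _
  _ = ‖v‖ := by rw [norm_e1 n hn, one_mul]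

lemma inner_par_perp {n : ℕ} (hn : 0 < n) (v : EuclideanSpace ℝ (Fin n)) : ⟪par v, perp v⟫ = 0 := by
  rw [perp, par, real_inner_smul_left, inner_sub_right, real_inner_smul_right,
    inner_e1_e1 n hn]
  ring

lemma norm_perp_le {n : ℕ} (hn : 0 < n) (v : EuclideanSpace ℝ (Fin n)) : ‖perp v‖ ≤ ‖v‖ := by
  have hv : v = par v + perp v := by simp [perp]
  have h2 : ‖v‖^2 = ‖par v‖^2 + ‖perp v‖^2 := by
    have h := norm_add_sq_real (par v) (perp v)
    rw [inner_par_perp hn, ← hv] at h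
    linarith
  nlinarith [norm_nonneg v, norm_nonneg (perp v), norm_nonneg (par v)]

lemma fin1 (γ s np D1 T : ℝ) (hγ0 : 0 ≤ γ) (hs0 : 0 ≤ s) (hnp0 : 0 ≤ np)
    (h1 : D1 ≤ s*np + γ/25*np) (h2 : T ≤ (3/10)*γ*np) :
    D1 + T ≤ ((1+γ)*s+γ)*np := by nlinarith [mul_nonneg (mul_nonneg hγ0 hs0) hnp0]

lemma fin2 (γ s np D1 D2 T : ℝ) (hγ0 : 0 ≤ γ) (hs0 : 0 ≤ s) (hnp0 : 0 ≤ np)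
    (h1 : D1 ≤ s*np + γ/25*np) (h1' : D2 ≤ γ/100*np) (h2 : T ≤ D1 + D2) :
    D2 + T ≤ ((1+γ)*s+γ)*np := by nlinarith [mul_nonneg (mul_nonneg hγ0 hs0) hnp0]

lemma core (C₁ C₂ γ c δ s P np npt nqt D1 D2 a b : ℝ)
    (hC₁ : 0 < C₁) (hC₂ : 0 < C₂)
    (hγ0 : 0 < γ) (hγ37 : γ ≤ 0.37)
    (hc : c = 1/(200*(C₁+C₂+1)))
    (hδ : δ = c*γ/4)
    (hs0 : 0 ≤ s) (hs4 : s ≤ 4)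
    (ha : 0 < a) (hb : 0 < b)
    (hP0 : 0 ≤ P) (hnp0 : 0 ≤ np) (hnpt0 : 0 ≤ npt) (hnqt0 : 0 ≤ nqt)
    (hD10 : 0 ≤ D1) (hD20 : 0 ≤ D2)
    (hF1 : D1 ≤ (s + C₁*δ*(1+s))*P)
    (hF2 : D2 ≤ C₁*δ*(1+s)*P)
    (hF4 : P ≤ (1+C₂*δ*(1+s))*np)
    (hab : |a - b| ≤ D1 + D2)
    (hnpa : np < c*γ*a)
    (hnpt : npt ≤ np + D1)
    (hnqt : nqt ≤ b) :
    D1 + |a - b| *npt*b⁻¹ ≤ ((1+γ)*s+γ)*np ∧ D2 + |a - b| *nqt*b⁻¹ ≤ ((1+γ)*s+γ)*np := by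
  have hc0 : 0 < c := by rw [hc]; positivity
  have hcC₁ : c*C₁ ≤ 1/200 := by
    rw [hc, div_mul_eq_mul_div, div_le_div_iff₀ (by positivity) (by norm_num)]
    nlinarith
  have hcC₂ : c*C₂ ≤ 1/200 := by
    rw [hc, div_mul_eq_mul_div, div_le_div_iff₀ (by positivity) (by norm_num)]
    nlinarith
  have hc200 : c ≤ 1/200 := by
    rw [hc]
    apply one_div_le_one_div_of_le (by norm_num)
    nlinarith
  have hδ0 : 0 ≤ δ := by rw [hδ]; positivity
  have h1s : 1+s ≤ 5 := by linarith
  have hEC₁ : C₁*δ*(1+s) ≤ γ/160 := by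
    have key : (c*C₁)*(γ/4)*(1+s) ≤ (1/200)*(γ/4)*5 := by
      have h1 : (c*C₁)*(γ/4) ≤ (1/200)*(γ/4) := mul_le_mul_of_nonneg_right hcC₁ (by positivity)
      exact mul_le_mul h1 h1s (by linarith) (by positivity)
    calc C₁*δ*(1+s) = (c*C₁)*(γ/4)*(1+s) := by rw [hδ]; ring
    _ ≤ (1/200)*(γ/4)*5 := key
    _ = γ/160 := by ring
  have hEC₂ : C₂*δ*(1+s) ≤ γ/160 := by
    have key : (c*C₂)*(γ/4)*(1+s) ≤ (1/200)*(γ/4)*5 := by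
      have h1 : (c*C₂)*(γ/4) ≤ (1/200)*(γ/4) := mul_le_mul_of_nonneg_right hcC₂ (by positivity)
      exact mul_le_mul h1 h1s (by linarith) (by positivity)
    calc C₂*δ*(1+s) = (c*C₂)*(γ/4)*(1+s) := by rw [hδ]; ring
    _ ≤ (1/200)*(γ/4)*5 := key
    _ = γ/160 := by ring
  have k1 : D1 ≤ (s + γ/160)*P := by nlinarith [mul_nonneg (sub_nonneg.2 hEC₁) hP0]
  have k2 : P ≤ (1+γ/160)*np := by nlinarith [mul_nonneg (sub_nonneg.2 hEC₂) hnp0]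
  have hγnp : 0 ≤ γ*np := mul_nonneg hγ0.le hnp0
  have hsγnp : s*(γ*np) ≤ 4*(γ*np) := mul_le_mul_of_nonneg_right hs4 hγnp
  have hγγnp : γ*(γ*np) ≤ 0.37*(γ*np) := mul_le_mul_of_nonneg_right hγ37 hγnp
  have hD1' : D1 ≤ s*np + (γ/25)*np := by
    have h := mul_le_mul_of_nonneg_left k2 (show (0:ℝ) ≤ s + γ/160 by linarith)
    nlinarith [h, hsγnp, hγγnp]
  have hD2' : D2 ≤ (γ/100)*np := by
    have h1 : C₁*δ*(1+s)*P ≤ (γ/160)*P := mul_le_mul_of_nonneg_right hEC₁ hP0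
    have h2 : (γ/160)*P ≤ (γ/160)*((1+γ/160)*np) :=
      mul_le_mul_of_nonneg_left k2 (by positivity)
    nlinarith [hγγnp]
  have hDsum5 : D1 + D2 ≤ 5*np := by
    nlinarith [mul_le_mul_of_nonneg_right hs4 hnp0, mul_le_mul_of_nonneg_right hγ37 hnp0]
  have hcγ : c*γ ≤ 0.002 := by nlinarith [mul_le_mul_of_nonneg_right hc200 hγ0.le]
  have ha2b : a ≤ 2*b := by
    nlinarith [le_abs_self (a-b), mul_le_mul_of_nonneg_right hcγ ha.le]
  have hnpt6 : npt ≤ 6*np := by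
    nlinarith [mul_le_mul_of_nonneg_right hs4 hnp0, mul_le_mul_of_nonneg_right hγ37 hnp0]
  have hbinv : (0:ℝ) ≤ b⁻¹ := by positivity
  have hbb : b * b⁻¹ = 1 := mul_inv_cancel₀ hb.ne'
  have t2 : (D1+D2)*np ≤ (γ/20)*(np*b) := by
    nlinarith [mul_le_mul_of_nonneg_right hDsum5 hnp0,
      mul_le_mul_of_nonneg_right hnpa.le hnp0,
      mul_le_mul_of_nonneg_right ha2b (mul_nonneg (mul_nonneg hc0.le hγ0.le) hnp0),
      mul_le_mul_of_nonneg_right hc200 (mul_nonneg (mul_nonneg hγ0.le hnp0) hb.le)]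
  have t1 : |a - b| *npt ≤ (D1+D2)*(6*np) :=
    mul_le_mul hab hnpt6 hnpt0 (by linarith)
  have t3 : |a - b| *npt*b⁻¹ ≤ (3/10)*γ*np := by
    calc |a - b| *npt*b⁻¹ ≤ ((D1+D2)*(6*np))*b⁻¹ := mul_le_mul_of_nonneg_right t1 hbinv
    _ ≤ ((3/10)*γ*(np*b))*b⁻¹ := by
        apply mul_le_mul_of_nonneg_right _ hbinv
        nlinarith [t2]
    _ = (3/10)*γ*np := by field_simp
  constructor
  · exact fin1 γ s np D1 (|a - b| * npt * b⁻¹) hγ0.le hs0 hnp0 hD1' t3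
  · have s0 : nqt*b⁻¹ ≤ 1 := by
      calc nqt*b⁻¹ ≤ b*b⁻¹ := mul_le_mul_of_nonneg_right hnqt hbinv
      _ = 1 := hbb
    have s1 : |a - b| *nqt*b⁻¹ ≤ |a - b| := by
      calc |a - b| *nqt*b⁻¹ = |a - b| *(nqt*b⁻¹) := by ring
      _ ≤ |a - b| *1 := mul_le_mul_of_nonneg_left s0 (abs_nonneg _)
      _ = |a - b| := by ring
    have h2 : |a - b| * nqt * b⁻¹ ≤ D1 + D2 := le_trans s1 hab
    exact fin2 γ s np D1 D2 (|a - b| * nqt * b⁻¹) hγ0.le hs0 hnp0 hD1' hD2' h2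


/-- Lemma `closeness4`: the original and auxiliary sequences stay close after
the normalization step. -/
theorem statement14 (C₁ C₂ : ℝ) (hC₁ : 0 < C₁) (hC₂ : 0 < C₂) :
    ∃ c : ℝ, 0 < c ∧
      ∀ (n1 n2 : ℕ), 16 ≤ n2 →
      ∀ δ : ℝ, δ = c / (4 * Real.log n2) →
      ∀ t : ℕ, t ≤ ⌈Real.log n2 / (4 * Real.log (Real.log n2))⌉₊ →
      ∀ (vt : EuclideanSpace ℝ (Fin n2)), ‖vt‖ = 1 →
      ∀ (uh uth : EuclideanSpace ℝ (Fin n1)), uh ≠ 0 → uth ≠ 0 →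
      ‖par uh - par uth‖ ≤ (cseq n2 (2 * t) + C₁ * δ * (1 + cseq n2 (2 * t))) * ‖par vt‖ →
      ‖perp uh - perp uth‖ ≤ C₁ * δ * (1 + cseq n2 (2 * t)) * ‖par vt‖ →
      (1 - C₂ * δ * (1 + cseq n2 (2 * t))) * ‖par uh‖ ≤ ‖par vt‖ →
      ‖par vt‖ ≤ (1 + C₂ * δ * (1 + cseq n2 (2 * t))) * ‖par uh‖ →
      ‖par (‖uh‖⁻¹ • uh)‖ < c / Real.log n2 →
      max ‖par (‖uh‖⁻¹ • uh) - par (‖uth‖⁻¹ • uth)‖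
          ‖perp (‖uh‖⁻¹ • uh) - perp (‖uth‖⁻¹ • uth)‖
        ≤ cseq n2 (2 * t + 1) * ‖par (‖uh‖⁻¹ • uh)‖ := by
  refine ⟨1/(200*(C₁+C₂+1)), by positivity, ?_⟩
  intro n1 n2 hn2 δ hδ t ht vt hvt uh uth huh huth hF1 hF2 _hF3 hF4 hsmall
  have hn1 : 0 < n1 := by
    rcases Nat.eq_zero_or_pos n1 with h | h
    · subst h; exact absurd (Subsingleton.elim _ _ : uh = 0) huh
    · exact h
  -- numeric setup
  have hn2' : (16:ℝ) ≤ (n2:ℝ) := by exact_mod_cast hn2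
  have h16 : Real.log 16 ≤ Real.log n2 := Real.log_le_log (by norm_num) hn2'
  have hl16 : Real.log 16 = 4 * Real.log 2 := by
    rw [show (16:ℝ) = 2^4 by norm_num, Real.log_pow]; norm_num
  have hL : (2.77:ℝ) ≤ Real.log n2 := by nlinarith [Real.log_two_gt_d9]
  have hL0 : (0:ℝ) < Real.log n2 := by linarith
  have hlogL : 1 ≤ Real.log (Real.log n2) := by
    rw [Real.le_log_iff_exp_le hL0]
    nlinarith [Real.exp_one_lt_d9]
  set γ : ℝ := 1 / Real.log n2 with hγdef
  have hγ0 : 0 < γ := by rw [hγdef]; positivity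
  have hγ37 : γ ≤ 0.37 := by
    rw [hγdef, div_le_iff₀ hL0]; nlinarith
  have h1γ : (1:ℝ) ≤ 1 + γ := by linarith
  have hpow5 : (1+γ)^(2*t+1) ≤ 5 := by
    have ht' : (t:ℝ) ≤ (⌈Real.log n2/(4*Real.log (Real.log n2))⌉₊ : ℝ) := by
      exact_mod_cast ht
    have h1 : (t:ℝ) ≤ Real.log n2/(4*Real.log (Real.log n2)) + 1 := by
      have h := Nat.ceil_lt_add_one
        (show (0:ℝ) ≤ Real.log n2/(4*Real.log (Real.log n2)) by positivity)
      linarith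
    have h3 : Real.log n2/(4*Real.log (Real.log n2)) ≤ Real.log n2/4 :=
      div_le_div_of_nonneg_left hL0.le (by norm_num) (by linarith)
    have htL : ((2*t+1 : ℕ):ℝ) ≤ 1.6*Real.log n2 := by push_cast; nlinarith
    have hexp16 : Real.exp 1.6 ≤ 5 := by
      have h8 : Real.exp 8 < 3125 := by
        have he : Real.exp 8 = (Real.exp 1)^8 := by rw [← Real.exp_nat_mul]; norm_num
        rw [he]
        have hp : (Real.exp 1)^8 < 2.7182818286^8 :=
          pow_lt_pow_left₀ Real.exp_one_lt_d9 (Real.exp_pos 1).le (by norm_num)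
        nlinarith [hp]
      by_contra h
      push_neg at h
      have h5 : (Real.exp 1.6)^5 = Real.exp 8 := by rw [← Real.exp_nat_mul]; norm_num
      have h6 : (5:ℝ)^5 ≤ (Real.exp 1.6)^5 := pow_le_pow_left₀ (by norm_num) h.le 5
      rw [h5] at h6
      norm_num at h6
      linarith
    calc (1+γ)^(2*t+1) ≤ (Real.exp γ)^(2*t+1) :=
          pow_le_pow_left₀ (by positivity) (by linarith [Real.add_one_le_exp γ]) _
    _ = Real.exp ((2*t+1 : ℕ)*γ) := by rw [← Real.exp_nat_mul]
    _ ≤ Real.exp 1.6 := by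
        apply Real.exp_le_exp.2
        rw [hγdef, mul_one_div, div_le_iff₀ hL0]
        nlinarith [htL]
    _ ≤ 5 := hexp16
  have hs0 : 0 ≤ cseq n2 (2*t) := by
    rw [cseq, ← hγdef]
    have h : (1:ℝ) ≤ (1+γ)^(2*t) := one_le_pow₀ h1γ
    linarith
  have hs4 : cseq n2 (2*t) ≤ 4 := by
    rw [cseq, ← hγdef]
    have hmono : (1+γ)^(2*t) ≤ (1+γ)^(2*t+1) := pow_le_pow_right₀ h1γ (Nat.le_succ _)
    linarith
  have hRrel : cseq n2 (2*t+1) = (1+γ)*(cseq n2 (2*t)) + γ := by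
    rw [cseq, cseq, ← hγdef, pow_succ]; ring
  have hδγ : δ = (1/(200*(C₁+C₂+1)))*γ/4 := by rw [hδ, hγdef]; ring
  -- geometric setup
  have ha : 0 < ‖uh‖ := norm_pos_iff.2 huh
  have hb : 0 < ‖uth‖ := norm_pos_iff.2 huth
  have hainv : (0:ℝ) ≤ ‖uh‖⁻¹ := inv_nonneg.2 ha.le
  have hab : |‖uh‖ - ‖uth‖| ≤ ‖par uh - par uth‖ + ‖perp uh - perp uth‖ := by
    have hdecomp : uh - uth = (par uh - par uth) + (perp uh - perp uth) := by
      simp only [perp]; abel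
    calc |‖uh‖ - ‖uth‖| ≤ ‖uh - uth‖ := abs_norm_sub_norm_le _ _
    _ = ‖(par uh - par uth) + (perp uh - perp uth)‖ := by rw [← hdecomp]
    _ ≤ _ := norm_add_le _ _
  have hnpt : ‖par uth‖ ≤ ‖par uh‖ + ‖par uh - par uth‖ := by
    have h : par uth = par uh - (par uh - par uth) := by abel
    conv_lhs => rw [h]
    exact norm_sub_le _ _
  have hnqt : ‖perp uth‖ ≤ ‖uth‖ := norm_perp_le hn1 uth
  have hXnorm : ‖par (‖uh‖⁻¹ • uh)‖ = ‖uh‖⁻¹ * ‖par uh‖ := by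
    rw [par_smul, norm_smul, Real.norm_eq_abs, abs_of_nonneg hainv]
  have hnpa : ‖par uh‖ < (1/(200*(C₁+C₂+1)))*γ*‖uh‖ := by
    rw [hXnorm] at hsmall
    have h2 : (1/(200*(C₁+C₂+1)))/Real.log n2 = (1/(200*(C₁+C₂+1)))*γ := by
      rw [hγdef]; ring
    rw [h2] at hsmall
    have h3 := mul_lt_mul_of_pos_left hsmall ha
    rw [← mul_assoc, mul_inv_cancel₀ ha.ne', one_mul] at h3
    nlinarith [h3]
  obtain ⟨kpar, kperp⟩ :=
    core C₁ C₂ γ (1/(200*(C₁+C₂+1))) δ (cseq n2 (2*t)) ‖par vt‖ ‖par uh‖ ‖par uth‖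
      ‖perp uth‖ ‖par uh - par uth‖ ‖perp uh - perp uth‖ ‖uh‖ ‖uth‖
      hC₁ hC₂ hγ0 hγ37 rfl hδγ hs0 hs4 ha hb (norm_nonneg _) (norm_nonneg _)
      (norm_nonneg _) (norm_nonneg _) (norm_nonneg _) (norm_nonneg _)
      hF1 hF2 hF4 hab hnpa hnpt hnqt
  have habs : |‖uh‖⁻¹ - ‖uth‖⁻¹| = |‖uh‖ - ‖uth‖| * (‖uh‖⁻¹ * ‖uth‖⁻¹) := by
    rw [show ‖uh‖⁻¹ - ‖uth‖⁻¹ = (‖uth‖ - ‖uh‖) * (‖uh‖⁻¹ * ‖uth‖⁻¹) by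
      field_simp]
    rw [abs_mul, abs_of_nonneg (by positivity : (0:ℝ) ≤ ‖uh‖⁻¹ * ‖uth‖⁻¹), abs_sub_comm]
  apply max_le
  · calc ‖par (‖uh‖⁻¹ • uh) - par (‖uth‖⁻¹ • uth)‖
        = ‖(‖uh‖⁻¹) • (par uh - par uth) + (‖uh‖⁻¹ - ‖uth‖⁻¹) • par uth‖ := by
          rw [par_smul, par_smul, smul_sub, sub_smul]; congr 1; abel
    _ ≤ ‖(‖uh‖⁻¹) • (par uh - par uth)‖ + ‖(‖uh‖⁻¹ - ‖uth‖⁻¹) • par uth‖ :=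
          norm_add_le _ _
    _ = ‖uh‖⁻¹ * ‖par uh - par uth‖
          + (|‖uh‖ - ‖uth‖| * (‖uh‖⁻¹ * ‖uth‖⁻¹)) * ‖par uth‖ := by
          rw [norm_smul, norm_smul, Real.norm_eq_abs, Real.norm_eq_abs,
            abs_of_nonneg hainv, habs]
    _ = ‖uh‖⁻¹ * (‖par uh - par uth‖
          + |‖uh‖ - ‖uth‖| * ‖par uth‖ * ‖uth‖⁻¹) := by ring
    _ ≤ ‖uh‖⁻¹ * (((1+γ)*(cseq n2 (2*t))+γ) * ‖par uh‖) :=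
          mul_le_mul_of_nonneg_left kpar hainv
    _ = cseq n2 (2*t+1) * (‖uh‖⁻¹ * ‖par uh‖) := by rw [hRrel]; ring
    _ = cseq n2 (2*t+1) * ‖par (‖uh‖⁻¹ • uh)‖ := by rw [hXnorm]
  · calc ‖perp (‖uh‖⁻¹ • uh) - perp (‖uth‖⁻¹ • uth)‖
        = ‖(‖uh‖⁻¹) • (perp uh - perp uth) + (‖uh‖⁻¹ - ‖uth‖⁻¹) • perp uth‖ := by
          rw [perp_smul, perp_smul, smul_sub, sub_smul]; congr 1; abel
    _ ≤ ‖(‖uh‖⁻¹) • (perp uh - perp uth)‖ + ‖(‖uh‖⁻¹ - ‖uth‖⁻¹) • perp uth‖ :=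
          norm_add_le _ _
    _ = ‖uh‖⁻¹ * ‖perp uh - perp uth‖
          + (|‖uh‖ - ‖uth‖| * (‖uh‖⁻¹ * ‖uth‖⁻¹)) * ‖perp uth‖ := by
          rw [norm_smul, norm_smul, Real.norm_eq_abs, Real.norm_eq_abs,
            abs_of_nonneg hainv, habs]
    _ = ‖uh‖⁻¹ * (‖perp uh - perp uth‖
          + |‖uh‖ - ‖uth‖| * ‖perp uth‖ * ‖uth‖⁻¹) := by ring
    _ ≤ ‖uh‖⁻¹ * (((1+γ)*(cseq n2 (2*t))+γ) * ‖par uh‖) :=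
          mul_le_mul_of_nonneg_left kperp hainv
    _ = cseq n2 (2*t+1) * (‖uh‖⁻¹ * ‖par uh‖) := by rw [hRrel]; ring
    _ = cseq n2 (2*t+1) * ‖par (‖uh‖⁻¹ • uh)‖ := by rw [hXnorm]

end ALSPaper
end
end
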